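/- arXiv:2402.00301 — 3 statements merged into one kernel-verified Lean document; each statement's English description precedes it below -/
import Mathlib

section
/- Corollary to Pascal's Theorem: Let A, B, C, D, E be five distinct points of a conic κ. If l is a line through E that avoids each of the points A, B, C, D, and l passes through a sixth point F of κ with F distinct from each of A, B, C, D, E, then F = l·A(CD·XY), where X = AB·DE and Y = BC·l; that is, F is the intersection of l with the line joining A to the point CD·((AB·DE)(BC·l)). -/
open Configuration

universe u
variable (P L : Type u) [Membership P L]

/-- Three points are collinear if some line passes through all three. -/
def Col (A B C : P) : Prop := ∃ l : L, A ∈ l ∧ B ∈ l ∧ C ∈ l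

/-- Every line of `L` is incident with at least `n` distinct points. -/
def LinesHaveAtLeast (n : ℕ) : Prop :=
  ∀ l : L, ∃ s : Finset P, n ≤ s.card ∧ ∀ X ∈ s, X ∈ l

/-- An object of the plane: the range of a line or the pencil of a point. -/
inductive Obj (P L : Type u) where
  | range : L → Obj P L
  | pencil : P → Obj P L

/-- The carrier of an object: the points on the line, resp. the lines through
the point. -/
abbrev Obj.Carrier {P L : Type u} [Membership P L] : Obj P L → Type u
  | .range l => {X : P // X ∈ l}
  | .pencil U => {k : L // U ∈ k}

/-- `f` is the perspectivity from the range of `l` to the range of `m` with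
center `O`, a point outside both `l` and `m` : each point `X` of `l` is mapped
to the point `(OX)·m`, i.e. `O`, `X` and `f X` are collinear. -/
def IsRangePersp (l m : L) (f : {X : P // X ∈ l} → {Y : P // Y ∈ m}) : Prop :=
  ∃ O : P, O ∉ l ∧ O ∉ m ∧
    ∀ X : {X : P // X ∈ l}, ∃ k : L, O ∈ k ∧ (X : P) ∈ k ∧ ((f X : P)) ∈ k

/-- `f` is the elementary map from the pencil of `U` to the range of a line `l`
not through `U` : each line `k` through `U` is sent to the point `k·l`. -/
def IsElemMap (U : P) (l : L) (f : {k : L // U ∈ k} → {X : P // X ∈ l}) : Prop :=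
  U ∉ l ∧ ∀ k : {k : L // U ∈ k}, ((f k : P)) ∈ (k : L)

/-- `f` is the elementary map from the range of a line `l` to the pencil of a
point `U` outside `l` : each point `X` of `l` is sent to the line `UX`. -/
def IsElemInv (U : P) (l : L) (f : {X : P // X ∈ l} → {k : L // U ∈ k}) : Prop :=
  U ∉ l ∧ ∀ X : {X : P // X ∈ l}, (X : P) ∈ ((f X : L))

/-- A projectivity (between ranges or pencils) : a composite of finitely many
perspectivities and elementary maps. -/
inductive IsProj : (a b : Obj P L) → (a.Carrier → b.Carrier) → Prop where
  | persp {l m : L} {f : {X : P // X ∈ l} → {Y : P // Y ∈ m}} :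
      IsRangePersp P L l m f → IsProj (.range l) (.range m) f
  | elem {U : P} {l : L} {f : {k : L // U ∈ k} → {X : P // X ∈ l}} :
      IsElemMap P L U l f → IsProj (.pencil U) (.range l) f
  | elemInv {U : P} {l : L} {f : {X : P // X ∈ l} → {k : L // U ∈ k}} :
      IsElemInv P L U l f → IsProj (.range l) (.pencil U) f
  | comp {a b c : Obj P L} {f : a.Carrier → b.Carrier} {g : b.Carrier → c.Carrier} :
      IsProj a b f → IsProj b c g → IsProj a c (g ∘ f)

/-- Axiom T: every projectivity of a range or a pencil onto itself having three
distinct fixed elements is the identity. -/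
def AxiomT : Prop :=
  ∀ (a : Obj P L) (f : a.Carrier → a.Carrier), IsProj P L a a f →
    (∃ x y z : a.Carrier, x ≠ y ∧ x ≠ z ∧ y ≠ z ∧ f x = x ∧ f y = y ∧ f z = z) →
    ∀ w, f w = w

/-- The Steiner conic `κ(π;U,V)` defined by a projectivity `π : U* → V*` :
the locus of points `l·π(l)` for `l` a line through `U`. -/
def conicSet (U V : P) (π : {k : L // U ∈ k} → {k : L // V ∈ k}) : Set P :=
  {X : P | ∃ k : {k : L // U ∈ k}, X ∈ (k : L) ∧ X ∈ ((π k : L))}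

/-- A conic: the Steiner conic of some nonperspective projectivity between the
pencils of two distinct points. -/
def IsConic (κ : Set P) : Prop :=
  ∃ (U V : P) (π : {k : L // U ∈ k} → {k : L // V ∈ k}),
    U ≠ V ∧ IsProj P L (.pencil U) (.pencil V) π ∧
    (∀ k : {k : L // U ∈ k}, ((π k : L)) ≠ (k : L)) ∧
    κ = conicSet P L U V π

/-- A line `t` is tangent to `κ` at `Q` if `Q` is on `κ` and on `t`, and is the
only point of `κ` incident with `t`. -/
def IsTangent (κ : Set P) (t : L) (Q : P) : Prop :=
  Q ∈ κ ∧ Q ∈ t ∧ ∀ X ∈ κ, X ∈ t → X = Q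

/-- A line is a secant of `κ` if it passes through two distinct points of `κ`. -/
def IsSecant (κ : Set P) (s : L) : Prop :=
  ∃ X Y : P, X ≠ Y ∧ X ∈ κ ∧ Y ∈ κ ∧ X ∈ s ∧ Y ∈ s

/-- Axiom P: the tangents to a conic at any three distinct points of the conic
are nonconcurrent. -/
def AxiomP : Prop :=
  ∀ κ : Set P, IsConic P L κ →
    ∀ X Y Z : P, X ∈ κ → Y ∈ κ → Z ∈ κ → X ≠ Y → X ≠ Z → Y ≠ Z →
      ∀ tx ty tz : L, IsTangent P L κ tx X → IsTangent P L κ ty Y → IsTangent P L κ tz Z →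
        ¬ ∃ W : P, W ∈ tx ∧ W ∈ ty ∧ W ∈ tz

namespace PascalAux

variable {P L}
variable [Configuration.ProjectivePlane P L]

set_option linter.unusedSectionVars false

theorem nonempty_line' (P' L' : Type u) [Membership P' L'] [Configuration.ProjectivePlane P' L'] :
    Nonempty L' := by
  obtain ⟨p₁, p₂, p₃, l₁, l₂, l₃, -⟩ := @ProjectivePlane.exists_config P' L' _ _
  exact ⟨l₁⟩

theorem nonempty_point' (P' L' : Type u) [Membership P' L'] [Configuration.ProjectivePlane P' L'] :
    Nonempty P' := by
  obtain ⟨p₁, -⟩ := @ProjectivePlane.exists_config P' L' _ _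
  exact ⟨p₁⟩

variable (P) in
/-- meet of two lines -/
noncomputable def ml (l m : L) : P :=
  open Classical in
  if h : l = m then Classical.choice (nonempty_point' P L) else HasPoints.mkPoint h

variable (L) in
/-- join of two points -/
noncomputable def jp (A B : P) : L :=
  open Classical in
  if h : A = B then Classical.choice (nonempty_line' P L) else HasLines.mkLine h

lemma jp_mem_left {A B : P} (h : A ≠ B) : A ∈ jp L A B := by
  rw [jp, dif_neg h]; exact (HasLines.mkLine_ax h).1

lemma jp_mem_right {A B : P} (h : A ≠ B) : B ∈ jp L A B := by
  rw [jp, dif_neg h]; exact (HasLines.mkLine_ax h).2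

lemma line_unique {A B : P} {l m : L} (h : A ≠ B) (h1 : A ∈ l) (h2 : B ∈ l)
    (h3 : A ∈ m) (h4 : B ∈ m) : l = m :=
  (Nondegenerate.eq_or_eq h1 h2 h3 h4).resolve_left h

lemma pt_unique {l m : L} {A B : P} (h : l ≠ m) (h1 : A ∈ l) (h2 : A ∈ m)
    (h3 : B ∈ l) (h4 : B ∈ m) : A = B :=
  (Nondegenerate.eq_or_eq h1 h3 h2 h4).resolve_right h

lemma jp_eq {A B : P} {l : L} (h : A ≠ B) (h1 : A ∈ l) (h2 : B ∈ l) : jp L A B = l :=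
  line_unique h (jp_mem_left h) (jp_mem_right h) h1 h2

lemma ml_mem_left {l m : L} (h : l ≠ m) : ml P l m ∈ l := by
  rw [ml, dif_neg h]; exact (HasPoints.mkPoint_ax h).1

lemma ml_mem_right {l m : L} (h : l ≠ m) : ml P l m ∈ m := by
  rw [ml, dif_neg h]; exact (HasPoints.mkPoint_ax h).2

lemma ml_eq {l m : L} {X : P} (h : l ≠ m) (h1 : X ∈ l) (h2 : X ∈ m) : ml P l m = X :=
  pt_unique h (ml_mem_left h) (ml_mem_right h) h1 h2

lemma jp_comm {A B : P} (h : A ≠ B) : jp L A B = jp L B A :=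
  jp_eq h (jp_mem_right h.symm) (jp_mem_left h.symm)

lemma ml_comm {l m : L} (h : l ≠ m) : ml P l m = ml P m l :=
  ml_eq h (ml_mem_right h.symm) (ml_mem_left h.symm)

/-- if `U ∈ k` but `U ∉ l` then `k ≠ l` -/
lemma line_ne {U : P} {k l : L} (h1 : U ∈ k) (h2 : U ∉ l) : k ≠ l :=
  fun h => h2 (h ▸ h1)

/-- if `A ∈ l` but `B ∉ l` then `B ≠ A` -/
lemma pt_ne {A B : P} {l : L} (h1 : A ∈ l) (h2 : B ∉ l) : B ≠ A :=
  fun h => h2 (h ▸ h1)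

/-- elementary map: cut a pencil by a line -/
noncomputable def cutMap (U : P) (l : L) (hU : U ∉ l) :
    {k : L // U ∈ k} → {X : P // X ∈ l} :=
  fun k => ⟨ml P k.1 l, ml_mem_right (line_ne k.2 hU)⟩

lemma cutMap_mem (U : P) (l : L) (hU : U ∉ l) (k : {k : L // U ∈ k}) :
    (cutMap U l hU k : P) ∈ k.1 :=
  ml_mem_left (line_ne k.2 hU)

/-- elementary map: join points of a range to an external point -/
noncomputable def joinMap (U : P) (l : L) (hU : U ∉ l) :
    {X : P // X ∈ l} → {k : L // U ∈ k} :=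
  fun X => ⟨jp L U X.1, jp_mem_left (pt_ne X.2 hU)⟩

lemma joinMap_mem (U : P) (l : L) (hU : U ∉ l) (X : {X : P // X ∈ l}) :
    (X : P) ∈ (joinMap U l hU X).1 :=
  jp_mem_right (pt_ne X.2 hU)

/-- perspectivity between two ranges -/
noncomputable def perspMap (O : P) (l m : L) (h1 : O ∉ l) (h2 : O ∉ m) :
    {X : P // X ∈ l} → {Y : P // Y ∈ m} :=
  fun X => ⟨ml P (jp L O X.1) m, ml_mem_right (line_ne (jp_mem_left (pt_ne X.2 h1)) h2)⟩

lemma perspMap_memJoin (O : P) (l m : L) (h1 : O ∉ l) (h2 : O ∉ m) (X : {X : P // X ∈ l}) :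
    (perspMap O l m h1 h2 X : P) ∈ jp L O X.1 :=
  ml_mem_left (line_ne (jp_mem_left (pt_ne X.2 h1)) h2)

lemma cutMap_isProj (U : P) (l : L) (hU : U ∉ l) :
    IsProj P L (.pencil U) (.range l) (cutMap U l hU) :=
  .elem ⟨hU, fun k => cutMap_mem U l hU k⟩

lemma joinMap_isProj (U : P) (l : L) (hU : U ∉ l) :
    IsProj P L (.range l) (.pencil U) (joinMap U l hU) :=
  .elemInv ⟨hU, fun X => joinMap_mem U l hU X⟩

lemma perspMap_isProj (O : P) (l m : L) (h1 : O ∉ l) (h2 : O ∉ m) :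
    IsProj P L (.range l) (.range m) (perspMap O l m h1 h2) := by
  refine .persp ⟨O, h1, h2, fun X => ⟨jp L O X.1, ?_, ?_, ?_⟩⟩
  · exact jp_mem_left (pt_ne X.2 h1)
  · exact jp_mem_right (pt_ne X.2 h1)
  · exact perspMap_memJoin O l m h1 h2 X

/-- every projectivity has an inverse projectivity -/
theorem exists_inverse {a b : Obj P L} {f : a.Carrier → b.Carrier}
    (hf : IsProj P L a b f) :
    ∃ g : b.Carrier → a.Carrier, IsProj P L b a g ∧
      (∀ x, g (f x) = x) ∧ (∀ y, f (g y) = y) := by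
  induction hf with
  | @persp l m f hf =>
    obtain ⟨O, hOl, hOm, hcol⟩ := hf
    refine ⟨perspMap O m l hOm hOl, perspMap_isProj O m l hOm hOl, ?_, ?_⟩
    · intro X
      obtain ⟨k, hOk, hXk, hfk⟩ := hcol X
      have hk : jp L O (f X : P) = k := jp_eq (pt_ne (f X).2 hOm) hOk hfk
      apply Subtype.ext
      show ml P (jp L O (f X : P)) l = (X : P)
      rw [hk]
      exact ml_eq (line_ne hOk hOl) hXk X.2
    · intro Y
      set X : {X : P // X ∈ l} := perspMap O m l hOm hOl Y with hX
      obtain ⟨k', hOk', hXk', hfk'⟩ := hcol X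
      have hXjp : (X : P) ∈ jp L O Y.1 := perspMap_memJoin O m l hOm hOl Y
      have hk' : k' = jp L O Y.1 :=
        line_unique (pt_ne X.2 hOl) hOk' hXk' (jp_mem_left (pt_ne Y.2 hOm)) hXjp
      apply Subtype.ext
      exact pt_unique (line_ne (jp_mem_left (pt_ne Y.2 hOm)) hOm)
        (hk' ▸ hfk') (f X).2 (jp_mem_right (pt_ne Y.2 hOm)) Y.2
  | @elem U l f hf =>
    obtain ⟨hU, hmem⟩ := hf
    refine ⟨joinMap U l hU, joinMap_isProj U l hU, ?_, ?_⟩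
    · intro k
      apply Subtype.ext
      exact jp_eq (pt_ne (f k).2 hU) k.2 (hmem k)
    · intro X
      apply Subtype.ext
      exact pt_unique (line_ne (jp_mem_left (pt_ne X.2 hU)) hU)
        (hmem (joinMap U l hU X)) (f _).2 (jp_mem_right (pt_ne X.2 hU)) X.2
  | @elemInv U l f hf =>
    obtain ⟨hU, hmem⟩ := hf
    refine ⟨cutMap U l hU, cutMap_isProj U l hU, ?_, ?_⟩
    · intro X
      apply Subtype.ext
      exact pt_unique (line_ne (f X).2 hU)
        (cutMap_mem U l hU (f X)) (cutMap U l hU (f X)).2 (hmem X) X.2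
    · intro k
      apply Subtype.ext
      exact line_unique (pt_ne (cutMap U l hU k).2 hU)
        (f _).2 (hmem (cutMap U l hU k)) k.2 (cutMap_mem U l hU k)
  | @comp a b c f g hfp hgp ihf ihg =>
    obtain ⟨f', hf', hf1, hf2⟩ := ihf
    obtain ⟨g', hg', hg1, hg2⟩ := ihg
    refine ⟨f' ∘ g', .comp hg' hf', fun x => ?_, fun y => ?_⟩
    · simp only [Function.comp_apply, hg1, hf1]
    · simp only [Function.comp_apply, hf2, hg2]

end PascalAux

namespace PascalAux

variable {P L}
variable [Configuration.ProjectivePlane P L]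

set_option linter.unusedSectionVars false

section Conic

variable {U V : P} {π : {k : L // U ∈ k} → {k : L // V ∈ k}}

theorem conic_mem_V (hUV : U ≠ V) : V ∈ conicSet P L U V π :=
  ⟨⟨jp L U V, jp_mem_left hUV⟩, jp_mem_right hUV, (π _).2⟩

theorem conic_mem_U (hUV : U ≠ V) (hπ : IsProj P L (.pencil U) (.pencil V) π) :
    U ∈ conicSet P L U V π := by
  obtain ⟨ψ, hψp, hψ1, hψ2⟩ := exists_inverse hπ
  refine ⟨ψ ⟨jp L U V, jp_mem_right hUV⟩, (ψ _).2, ?_⟩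
  have h := congrArg Subtype.val (hψ2 ⟨jp L U V, jp_mem_right hUV⟩)
  rw [show ((π (ψ ⟨jp L U V, jp_mem_right hUV⟩) : L)) = jp L U V from h]
  exact jp_mem_left hUV

theorem conic_chord (hUV : U ≠ V) {Q : P} (hQ : Q ∈ conicSet P L U V π)
    (hQU : Q ≠ U) (hQV : Q ≠ V) (k : {k : L // U ∈ k}) (hk : Q ∈ k.1) :
    (π k : L) = jp L V Q := by
  obtain ⟨k₀, h1, h2⟩ := hQ
  have hkk : k₀ = k := Subtype.ext (line_unique hQU h1 k₀.2 hk k.2)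
  rw [← hkk]
  exact (jp_eq hQV.symm (π k₀).2 h2).symm

theorem conic_noncol (hAxT : AxiomT P L) (hUV : U ≠ V)
    (hπ : IsProj P L (.pencil U) (.pencil V) π) (hnp : ∀ k, (π k : L) ≠ (k : L))
    {X Y Z : P} (hX : X ∈ conicSet P L U V π) (hY : Y ∈ conicSet P L U V π)
    (hZ : Z ∈ conicSet P L U V π)
    (hXY : X ≠ Y) (hXZ : X ≠ Z) (hYZ : Y ≠ Z) {m : L}
    (hXm : X ∈ m) (hYm : Y ∈ m) (hZm : Z ∈ m) : False := by
  obtain ⟨ψ, hψp, hψ1, hψ2⟩ := exists_inverse hπ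
  -- case: U on m
  by_cases hUm : U ∈ m
  · have thruU : ∀ {Pa Pb : P}, Pa ∈ conicSet P L U V π → Pb ∈ conicSet P L U V π →
        Pa ∈ m → Pb ∈ m → Pa ≠ U → Pb ≠ U → Pa = Pb := by
      intro Pa Pb ⟨ka, ha1, ha2⟩ ⟨kb, hb1, hb2⟩ ham hbm haU hbU
      have hka : ka = ⟨m, hUm⟩ := Subtype.ext (line_unique haU ha1 ka.2 ham hUm)
      have hkb : kb = ⟨m, hUm⟩ := Subtype.ext (line_unique hbU hb1 kb.2 hbm hUm)
      rw [hka] at ha2; rw [hkb] at hb2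
      exact pt_unique (hnp ⟨m, hUm⟩) ha2 ham hb2 hbm
    by_cases hXU : X = U
    · exact hYZ (thruU hY hZ hYm hZm (fun h => hXY (hXU.trans h.symm))
        (fun h => hXZ (hXU.trans h.symm)))
    · by_cases hYU : Y = U
      · exact hXZ (thruU hX hZ hXm hZm hXU (fun h => hYZ (hYU.trans h.symm)))
      · exact hXY (thruU hX hY hXm hYm hXU hYU)
  by_cases hVm : V ∈ m
  · have thruV : ∀ {Pa Pb : P}, Pa ∈ conicSet P L U V π → Pb ∈ conicSet P L U V π →
        Pa ∈ m → Pb ∈ m → Pa ≠ V → Pb ≠ V → Pa = Pb := by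
      intro Pa Pb ⟨ka, ha1, ha2⟩ ⟨kb, hb1, hb2⟩ ham hbm haV hbV
      have hka : (π ka : L) = m := line_unique haV ha2 (π ka).2 ham hVm
      have hkb : (π kb : L) = m := line_unique hbV hb2 (π kb).2 hbm hVm
      have hab : ka = kb := by
        have : π ka = π kb := Subtype.ext (hka.trans hkb.symm)
        have := congrArg ψ this
        rwa [hψ1, hψ1] at this
      have hkam : (ka : L) ≠ m := line_ne ka.2 hUm
      exact pt_unique hkam ha1 ham (hab ▸ hb1) hbm
    by_cases hXV : X = V
    · exact hYZ (thruV hY hZ hYm hZm (fun h => hXY (hXV.trans h.symm))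
        (fun h => hXZ (hXV.trans h.symm)))
    · by_cases hYV : Y = V
      · exact hXZ (thruV hX hZ hXm hZm hXV (fun h => hYZ (hYV.trans h.symm)))
      · exact hXY (thruV hX hY hXm hYm hXV hYV)
  -- main case
  · set χ : {X : P // X ∈ m} → {X : P // X ∈ m} :=
      cutMap V m hVm ∘ (π ∘ joinMap U m hUm) with hχ
    have hproj : IsProj P L (.range m) (.range m) χ :=
      .comp (.comp (joinMap_isProj U m hUm) hπ) (cutMap_isProj V m hVm)
    have hfix : ∀ {Q : P} (hQ : Q ∈ conicSet P L U V π) (hQm : Q ∈ m),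
        χ ⟨Q, hQm⟩ = ⟨Q, hQm⟩ := by
      intro Q hQ hQm
      have hQU : Q ≠ U := fun h => hUm (h ▸ hQm)
      have hQV : Q ≠ V := fun h => hVm (h ▸ hQm)
      apply Subtype.ext
      show ml P (π (joinMap U m hUm ⟨Q, hQm⟩) : L) m = Q
      rw [conic_chord hUV hQ hQU hQV _ (joinMap_mem U m hUm ⟨Q, hQm⟩)]
      exact ml_eq (line_ne (jp_mem_left hQV.symm) hVm) (jp_mem_right hQV.symm) hQm
    have hid := hAxT (.range m) χ hproj
      ⟨⟨X, hXm⟩, ⟨Y, hYm⟩, ⟨Z, hZm⟩,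
        fun h => hXY (congrArg Subtype.val h),
        fun h => hXZ (congrArg Subtype.val h),
        fun h => hYZ (congrArg Subtype.val h),
        hfix hX hXm, hfix hY hYm, hfix hZ hZm⟩
    have hUVm : jp L U V ≠ m := line_ne (jp_mem_left hUV) hUm
    set X₀ : P := ml P (jp L U V) m with hX₀
    have hX₀m : X₀ ∈ m := ml_mem_right hUVm
    have hX₀UV : X₀ ∈ jp L U V := ml_mem_left hUVm
    have hw := congrArg Subtype.val (hid ⟨X₀, hX₀m⟩)
    have hUX₀ : U ≠ X₀ := pt_ne hX₀m hUm
    have hjm : joinMap U m hUm ⟨X₀, hX₀m⟩ = ⟨jp L U V, jp_mem_left hUV⟩ :=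
      Subtype.ext (jp_eq hUX₀ (jp_mem_left hUV) hX₀UV)
    rw [show (χ ⟨X₀, hX₀m⟩ : P) = ml P (π (joinMap U m hUm ⟨X₀, hX₀m⟩) : L) m from rfl,
      hjm] at hw
    set v' : L := (π ⟨jp L U V, jp_mem_left hUV⟩ : L) with hv'
    have hv'm : v' ≠ m := line_ne (π ⟨jp L U V, jp_mem_left hUV⟩).2 hVm
    have hw' : ml P v' m = X₀ := hw
    have hX₀v' : X₀ ∈ v' := by rw [← hw']; exact ml_mem_left hv'm
    have hVX₀ : V ≠ X₀ := pt_ne hX₀m hVm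
    have : v' = jp L U V :=
      line_unique hVX₀ (π ⟨jp L U V, jp_mem_left hUV⟩).2 hX₀v'
        (jp_mem_right hUV) hX₀UV
    exact hnp ⟨jp L U V, jp_mem_left hUV⟩ this

/-- a point of the conic is off the chord of two other points -/
theorem conic_off (hAxT : AxiomT P L) (hUV : U ≠ V)
    (hπ : IsProj P L (.pencil U) (.pencil V) π) (hnp : ∀ k, (π k : L) ≠ (k : L))
    {X Y Z : P} (hX : X ∈ conicSet P L U V π) (hY : Y ∈ conicSet P L U V π)
    (hZ : Z ∈ conicSet P L U V π)
    (hYZ : Y ≠ Z) (hXY : X ≠ Y) (hXZ : X ≠ Z) : X ∉ jp L Y Z :=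
  fun h => conic_noncol hAxT hUV hπ hnp hX hY hZ hXY hXZ hYZ h
    (jp_mem_left hYZ) (jp_mem_right hYZ)

end Conic

end PascalAux

namespace PascalAux

variable {P L}
variable [Configuration.ProjectivePlane P L]

set_option linter.unusedSectionVars false
set_option maxHeartbeats 1000000

section Pentagon

variable {U V : P} {π : {k : L // U ∈ k} → {k : L // V ∈ k}}

/-- Degenerate Pascal for the inscribed pentagon `U T' Q V R` with the tangent
`u` at `U` : for every line `k` through `U`, the point `k·T'Q` lies on the line
joining `u·VQ` and `UT'·π(k)`.  (Taking `k = UR` this is Pascal for the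
degenerate hexagon `U U T' Q V R`.) -/
theorem pentagon (hAxT : AxiomT P L) (hUV : U ≠ V)
    (hπ : IsProj P L (.pencil U) (.pencil V) π) (hnp : ∀ k, (π k : L) ≠ (k : L))
    (ku : {k : L // U ∈ k}) (hku : (π ku : L) = jp L U V)
    {T' Q : P} (hT' : T' ∈ conicSet P L U V π) (hQ : Q ∈ conicSet P L U V π)
    (hT'U : T' ≠ U) (hT'V : T' ≠ V) (hQU : Q ≠ U) (hQV : Q ≠ V) (hT'Q : T' ≠ Q)
    (k : {k : L // U ∈ k}) :
    ml P k.1 (jp L T' Q) ∈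
      (jp L (ml P (jp L V Q) (ku : L)) (ml P (π k : L) (jp L U T')) : L) := by
  have hUκ := conic_mem_U hUV hπ
  have hVκ := conic_mem_V (π := π) hUV
  have noncol := fun {X Y Z : P} hX hY hZ h1 h2 h3 {m : L} =>
    conic_noncol (X := X) (Y := Y) (Z := Z) hAxT hUV hπ hnp hX hY hZ h1 h2 h3 (m := m)
  have off := fun {X Y Z : P} hX hY hZ h1 h2 h3 =>
    conic_off (X := X) (Y := Y) (Z := Z) hAxT hUV hπ hnp hX hY hZ h1 h2 h3
  have huUV : jp L U V ≠ (ku : L) := by have := hnp ku; rwa [hku] at this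
  have hVu : V ∉ (ku : L) := fun h =>
    huUV (line_unique hUV (jp_mem_left hUV) (jp_mem_right hUV) ku.2 h)
  have tangent_u : ∀ {Q' : P}, Q' ∈ conicSet P L U V π → Q' ∈ (ku : L) → Q' = U := by
    intro Q' hQ' hQ'u
    by_contra hne
    by_cases hQ'V : Q' = V
    · exact hVu (hQ'V ▸ hQ'u)
    · have hch := conic_chord hUV hQ' hne hQ'V ku hQ'u
      rw [hku] at hch
      refine noncol hUκ hVκ hQ' hUV (Ne.symm hne) (Ne.symm hQ'V)
        (jp_mem_left hUV) (jp_mem_right hUV) ?_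
      rw [hch]; exact jp_mem_right (Ne.symm hQ'V)
  have hTu : T' ∉ (ku : L) := fun h => hT'U (tangent_u hT' h)
  have hQu : Q ∉ (ku : L) := fun h => hQU (tangent_u hQ h)
  -- off-chord facts
  have hUT'Q : U ∉ jp L T' Q := off hUκ hT' hQ hT'Q (Ne.symm hT'U) (Ne.symm hQU)
  have hVUT' : V ∉ jp L U T' := off hVκ hUκ hT' (Ne.symm hT'U) hUV.symm (Ne.symm hT'V)
  have hUVQ : U ∉ jp L V Q := off hUκ hVκ hQ (Ne.symm hQV) hUV (Ne.symm hQU)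
  have hT'VQ : T' ∉ jp L V Q := off hT' hVκ hQ (Ne.symm hQV) hT'V hT'Q
  have hQUT' : Q ∉ jp L U T' := off hQ hUκ hT' (Ne.symm hT'U) hQU (Ne.symm hT'Q)
  have hVT'Q : V ∉ jp L T' Q := off hVκ hT' hQ hT'Q (Ne.symm hT'V) (Ne.symm hQV)
  have hT'UV : T' ∉ jp L U V := off hT' hUκ hVκ hUV hT'U hT'V
  -- E₁
  have hVQu : jp L V Q ≠ (ku : L) := line_ne (jp_mem_left (Ne.symm hQV)) hVu
  set E₁ : P := ml P (jp L V Q) (ku : L) with hE₁def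
  have hE₁VQ : E₁ ∈ jp L V Q := ml_mem_left hVQu
  have hE₁u : E₁ ∈ (ku : L) := ml_mem_right hVQu
  have hUE₁ : U ≠ E₁ := fun h => hUVQ (h ▸ hE₁VQ)
  have hE₁T'Q : E₁ ∉ jp L T' Q := by
    intro h
    have hVQT'Q : jp L V Q ≠ jp L T' Q := fun he => hT'VQ (by rw [he]; exact jp_mem_left hT'Q)
    have : E₁ = Q := pt_unique hVQT'Q hE₁VQ h (jp_mem_right (Ne.symm hQV)) (jp_mem_right hT'Q)
    exact hQu (this ▸ hE₁u)
  have huUT' : (ku : L) ≠ jp L U T' := fun he => hTu (by rw [he]; exact jp_mem_right (Ne.symm hT'U))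
  have hE₁UT' : E₁ ∉ jp L U T' := by
    intro h
    exact hUE₁ (pt_unique huUT' hE₁u h ku.2 (jp_mem_left (Ne.symm hT'U))).symm
  -- the projectivity chain
  set g₁ : {k : L // U ∈ k} → {X : P // X ∈ jp L T' Q} :=
    cutMap E₁ (jp L T' Q) hE₁T'Q ∘ (joinMap E₁ (jp L U T') hE₁UT' ∘
      (cutMap V (jp L U T') hVUT' ∘ π)) with hg₁
  set Θ : {k : L // U ∈ k} → {k : L // U ∈ k} :=
    joinMap U (jp L T' Q) hUT'Q ∘ g₁ with hΘ
  have hproj : IsProj P L (.pencil U) (.pencil U) Θ :=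
    .comp (.comp (.comp (.comp hπ (cutMap_isProj V (jp L U T') hVUT'))
      (joinMap_isProj E₁ (jp L U T') hE₁UT'))
      (cutMap_isProj E₁ (jp L T' Q) hE₁T'Q))
      (joinMap_isProj U (jp L T' Q) hUT'Q)
  have hval : ∀ k : {k : L // U ∈ k},
      (g₁ k : P) = ml P (jp L E₁ (ml P (π k : L) (jp L U T'))) (jp L T' Q) := fun _ => rfl
  -- fixed line 1 : the tangent u
  have fix1 : Θ ku = ku := by
    apply Subtype.ext
    show jp L U (g₁ ku : P) = (ku : L)
    have e1 : ml P (π ku : L) (jp L U T') = U := by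
      rw [hku]
      exact ml_eq (fun h => hT'UV (by rw [h]; exact jp_mem_right (Ne.symm hT'U)))
        (jp_mem_left hUV) (jp_mem_left (Ne.symm hT'U))
    have e2 : jp L E₁ U = (ku : L) := jp_eq (Ne.symm hUE₁) hE₁u ku.2
    rw [hval ku, e1, e2]
    have hp₁ : ml P (ku : L) (jp L T' Q) ∈ (ku : L) := ml_mem_left (line_ne ku.2 hUT'Q)
    have hp₁' : ml P (ku : L) (jp L T' Q) ∈ jp L T' Q := ml_mem_right (line_ne ku.2 hUT'Q)
    exact jp_eq (pt_ne hp₁' hUT'Q) ku.2 hp₁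
  -- fixed line 2 : UT'
  have k₂ : {k : L // U ∈ k} := ⟨jp L U T', jp_mem_left (Ne.symm hT'U)⟩
  have fix2 : Θ ⟨jp L U T', jp_mem_left (Ne.symm hT'U)⟩ = ⟨jp L U T', jp_mem_left (Ne.symm hT'U)⟩ := by
    apply Subtype.ext
    show jp L U (g₁ ⟨jp L U T', jp_mem_left (Ne.symm hT'U)⟩ : P) = jp L U T'
    have hπ2 : (π ⟨jp L U T', jp_mem_left (Ne.symm hT'U)⟩ : L) = jp L V T' :=
      conic_chord hUV hT' hT'U hT'V _ (jp_mem_right (Ne.symm hT'U))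
    have hUVT' : U ∉ jp L V T' := off hUκ hVκ hT' (Ne.symm hT'V) hUV (Ne.symm hT'U)
    have e1 : ml P (jp L V T') (jp L U T') = T' :=
      ml_eq (fun h => hUVT' (by rw [h]; exact jp_mem_left (Ne.symm hT'U)))
        (jp_mem_right (Ne.symm hT'V)) (jp_mem_right (Ne.symm hT'U))
    have hE₁T' : E₁ ≠ T' := fun h => hE₁T'Q (by rw [h]; exact jp_mem_left hT'Q)
    have e2 : ml P (jp L E₁ T') (jp L T' Q) = T' :=
      ml_eq (fun h => hE₁T'Q (by rw [← h]; exact jp_mem_left hE₁T'))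
        (jp_mem_right hE₁T') (jp_mem_left hT'Q)
    rw [hval _, hπ2, e1, e2]
  -- fixed line 3 : UQ
  have fix3 : Θ ⟨jp L U Q, jp_mem_left (Ne.symm hQU)⟩ = ⟨jp L U Q, jp_mem_left (Ne.symm hQU)⟩ := by
    apply Subtype.ext
    show jp L U (g₁ ⟨jp L U Q, jp_mem_left (Ne.symm hQU)⟩ : P) = jp L U Q
    have hπ3 : (π ⟨jp L U Q, jp_mem_left (Ne.symm hQU)⟩ : L) = jp L V Q :=
      conic_chord hUV hQ hQU hQV _ (jp_mem_right (Ne.symm hQU))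
    have hVQUT' : jp L V Q ≠ jp L U T' := fun h => hQUT' (by rw [← h]; exact jp_mem_right (Ne.symm hQV))
    have hD₃VQ : ml P (jp L V Q) (jp L U T') ∈ jp L V Q := ml_mem_left hVQUT'
    have hD₃UT' : ml P (jp L V Q) (jp L U T') ∈ jp L U T' := ml_mem_right hVQUT'
    have hE₁D₃ : E₁ ≠ ml P (jp L V Q) (jp L U T') := fun h => hE₁UT' (by rw [h]; exact hD₃UT')
    have e1 : jp L E₁ (ml P (jp L V Q) (jp L U T')) = jp L V Q := jp_eq hE₁D₃ hE₁VQ hD₃VQ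
    have e2 : ml P (jp L V Q) (jp L T' Q) = Q :=
      ml_eq (fun h => hVT'Q (by rw [← h]; exact jp_mem_left (Ne.symm hQV)))
        (jp_mem_right (Ne.symm hQV)) (jp_mem_right hT'Q)
    rw [hval _, hπ3, e1, e2]
  -- apply Axiom T
  have hne12 : ku ≠ ⟨jp L U T', jp_mem_left (Ne.symm hT'U)⟩ := by
    intro h
    have h' : (ku : L) = jp L U T' := congrArg Subtype.val h
    exact hTu (by rw [h']; exact jp_mem_right (Ne.symm hT'U))
  have hne13 : ku ≠ ⟨jp L U Q, jp_mem_left (Ne.symm hQU)⟩ := by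
    intro h
    have h' : (ku : L) = jp L U Q := congrArg Subtype.val h
    exact hQu (by rw [h']; exact jp_mem_right (Ne.symm hQU))
  have hne23 : (⟨jp L U T', jp_mem_left (Ne.symm hT'U)⟩ : {k : L // U ∈ k}) ≠
      ⟨jp L U Q, jp_mem_left (Ne.symm hQU)⟩ := by
    intro h
    have h' : jp L U T' = jp L U Q := congrArg Subtype.val h
    exact hQUT' (by rw [h']; exact jp_mem_right (Ne.symm hQU))
  have hid := hAxT (.pencil U) Θ hproj
    ⟨ku, ⟨jp L U T', jp_mem_left (Ne.symm hT'U)⟩, ⟨jp L U Q, jp_mem_left (Ne.symm hQU)⟩,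
      hne12, hne13, hne23, fix1, fix2, fix3⟩
  have hk := congrArg Subtype.val (hid k)
  have hg₁k : (g₁ k : P) ∈ k.1 := by
    rw [show k.1 = jp L U (g₁ k : P) from hk.symm]
    exact jp_mem_right (pt_ne (g₁ k).2 hUT'Q)
  have hml : ml P k.1 (jp L T' Q) = (g₁ k : P) :=
    ml_eq (line_ne k.2 hUT'Q) hg₁k (g₁ k).2
  rw [hml]
  exact cutMap_mem E₁ (jp L T' Q) hE₁T'Q
    ((joinMap E₁ (jp L U T') hE₁UT' ∘ (cutMap V (jp L U T') hVUT' ∘ π)) k)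

end Pentagon

end PascalAux

namespace PascalAux

variable {P L}
variable [Configuration.ProjectivePlane P L]

set_option linter.unusedSectionVars false
set_option maxHeartbeats 1000000

section PentagonV

variable {U V : P} {π : {k : L // U ∈ k} → {k : L // V ∈ k}}

/-- Degenerate Pascal for the inscribed "pentagon" `U T' V R` with the tangents
`u` at `U` and `v` at `V` : for every line `k` through `U`, the point `k·T'V`
lies on the line joining `u·v` and `UT'·π(k)`. -/
theorem pentagonV (hAxT : AxiomT P L) (hUV : U ≠ V)
    (hπ : IsProj P L (.pencil U) (.pencil V) π) (hnp : ∀ k, (π k : L) ≠ (k : L))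
    (ku : {k : L // U ∈ k}) (hku : (π ku : L) = jp L U V)
    {T' : P} (hT' : T' ∈ conicSet P L U V π)
    (hT'U : T' ≠ U) (hT'V : T' ≠ V)
    (k : {k : L // U ∈ k}) :
    ml P k.1 (jp L T' V) ∈
      (jp L (ml P (π ⟨jp L U V, jp_mem_left hUV⟩ : L) (ku : L))
        (ml P (π k : L) (jp L U T')) : L) := by
  obtain ⟨ψ, hψp, hψ1, hψ2⟩ := exists_inverse hπ
  have hUκ := conic_mem_U hUV hπ
  have hVκ := conic_mem_V (π := π) hUV
  have noncol := fun {X Y Z : P} hX hY hZ h1 h2 h3 {m : L} =>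
    conic_noncol (X := X) (Y := Y) (Z := Z) hAxT hUV hπ hnp hX hY hZ h1 h2 h3 (m := m)
  have off := fun {X Y Z : P} hX hY hZ h1 h2 h3 =>
    conic_off (X := X) (Y := Y) (Z := Z) hAxT hUV hπ hnp hX hY hZ h1 h2 h3
  have huUV : jp L U V ≠ (ku : L) := by have := hnp ku; rwa [hku] at this
  have hVu : V ∉ (ku : L) := fun h =>
    huUV (line_unique hUV (jp_mem_left hUV) (jp_mem_right hUV) ku.2 h)
  have tangent_u : ∀ {Q' : P}, Q' ∈ conicSet P L U V π → Q' ∈ (ku : L) → Q' = U := by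
    intro Q' hQ' hQ'u
    by_contra hne
    by_cases hQ'V : Q' = V
    · exact hVu (hQ'V ▸ hQ'u)
    · have hch := conic_chord hUV hQ' hne hQ'V ku hQ'u
      rw [hku] at hch
      refine noncol hUκ hVκ hQ' hUV (Ne.symm hne) (Ne.symm hQ'V)
        (jp_mem_left hUV) (jp_mem_right hUV) ?_
      rw [hch]; exact jp_mem_right (Ne.symm hQ'V)
  set kUV : {k : L // U ∈ k} := ⟨jp L U V, jp_mem_left hUV⟩ with hkUV
  set v : L := (π kUV : L) with hvdef
  have hVv : V ∈ v := (π kUV).2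
  have hvUV : v ≠ jp L U V := hnp kUV
  have hUv : U ∉ v := fun h =>
    hvUV (line_unique hUV h hVv (jp_mem_left hUV) (jp_mem_right hUV))
  have tangent_v : ∀ {Q' : P}, Q' ∈ conicSet P L U V π → Q' ∈ v → Q' = V := by
    intro Q' hQ' hQ'v
    by_contra hne
    by_cases hQ'U : Q' = U
    · exact hUv (hQ'U ▸ hQ'v)
    · have hch : (π ⟨jp L U Q', jp_mem_left (Ne.symm hQ'U)⟩ : L) = jp L V Q' :=
        conic_chord hUV hQ' hQ'U hne _ (jp_mem_right (Ne.symm hQ'U))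
      have hVQv : jp L V Q' = v := by
        by_contra hne2
        exact hne (pt_unique hne2 (jp_mem_right (Ne.symm hne)) hQ'v
          (jp_mem_left (Ne.symm hne)) hVv)
      have hkk : (⟨jp L U Q', jp_mem_left (Ne.symm hQ'U)⟩ : {k : L // U ∈ k}) = kUV := by
        have : π ⟨jp L U Q', jp_mem_left (Ne.symm hQ'U)⟩ = π kUV :=
          Subtype.ext (by rw [hch, hVQv, hvdef])
        have h2 := congrArg ψ this
        rwa [hψ1, hψ1] at h2
      have hQ'UV : Q' ∈ jp L U V := by
        have h' : jp L U Q' = jp L U V := congrArg Subtype.val hkk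
        rw [← h']; exact jp_mem_right (Ne.symm hQ'U)
      exact noncol hUκ hVκ hQ' hUV (Ne.symm hQ'U) (Ne.symm hne)
        (jp_mem_left hUV) (jp_mem_right hUV) hQ'UV
  have hTu : T' ∉ (ku : L) := fun h => hT'U (tangent_u hT' h)
  have hTv : T' ∉ v := fun h => hT'V (tangent_v hT' h)
  -- off-chord facts
  have hUT'V : U ∉ jp L T' V := off hUκ hT' hVκ hT'V (Ne.symm hT'U) hUV
  have hVUT' : V ∉ jp L U T' := off hVκ hUκ hT' (Ne.symm hT'U) hUV.symm (Ne.symm hT'V)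
  have hT'UV : T' ∉ jp L U V := off hT' hUκ hVκ hUV hT'U hT'V
  -- the centre O = u·v
  have hvu : v ≠ (ku : L) := fun h => hUv (by rw [h]; exact ku.2)
  set O : P := ml P v (ku : L) with hOdef
  have hOv : O ∈ v := ml_mem_left hvu
  have hOu : O ∈ (ku : L) := ml_mem_right hvu
  have hOU : O ≠ U := fun h => hUv (by rw [← h]; exact hOv)
  have hOV : O ≠ V := fun h => hVu (by rw [← h]; exact hOu)
  have huUT' : (ku : L) ≠ jp L U T' := fun he => hTu (by rw [he]; exact jp_mem_right (Ne.symm hT'U))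
  have hOUT' : O ∉ jp L U T' := fun h =>
    hOU (pt_unique huUT' hOu h ku.2 (jp_mem_left (Ne.symm hT'U)))
  have hvT'V : v ≠ jp L T' V := fun h => hTv (by rw [h]; exact jp_mem_left hT'V)
  have hOT'V : O ∉ jp L T' V := fun h =>
    hOV (pt_unique hvT'V hOv h hVv (jp_mem_right hT'V))
  -- the projectivity chain
  set g₂ : {k : L // U ∈ k} → {X : P // X ∈ jp L T' V} :=
    cutMap O (jp L T' V) hOT'V ∘ (joinMap O (jp L U T') hOUT' ∘
      (cutMap V (jp L U T') hVUT' ∘ π)) with hg₂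
  set Θ : {k : L // U ∈ k} → {k : L // U ∈ k} :=
    joinMap U (jp L T' V) hUT'V ∘ g₂ with hΘ
  have hproj : IsProj P L (.pencil U) (.pencil U) Θ :=
    .comp (.comp (.comp (.comp hπ (cutMap_isProj V (jp L U T') hVUT'))
      (joinMap_isProj O (jp L U T') hOUT'))
      (cutMap_isProj O (jp L T' V) hOT'V))
      (joinMap_isProj U (jp L T' V) hUT'V)
  have hval : ∀ k : {k : L // U ∈ k},
      (g₂ k : P) = ml P (jp L O (ml P (π k : L) (jp L U T'))) (jp L T' V) := fun _ => rfl
  -- fixed line 1 : the tangent u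
  have fix1 : Θ ku = ku := by
    apply Subtype.ext
    show jp L U (g₂ ku : P) = (ku : L)
    have e1 : ml P (π ku : L) (jp L U T') = U := by
      rw [hku]
      exact ml_eq (fun h => hT'UV (by rw [h]; exact jp_mem_right (Ne.symm hT'U)))
        (jp_mem_left hUV) (jp_mem_left (Ne.symm hT'U))
    have e2 : jp L O U = (ku : L) := jp_eq hOU hOu ku.2
    rw [hval ku, e1, e2]
    have hp₁ : ml P (ku : L) (jp L T' V) ∈ (ku : L) := ml_mem_left (line_ne ku.2 hUT'V)
    have hp₁' : ml P (ku : L) (jp L T' V) ∈ jp L T' V := ml_mem_right (line_ne ku.2 hUT'V)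
    exact jp_eq (pt_ne hp₁' hUT'V) ku.2 hp₁
  -- fixed line 2 : UT'
  have fix2 : Θ ⟨jp L U T', jp_mem_left (Ne.symm hT'U)⟩ = ⟨jp L U T', jp_mem_left (Ne.symm hT'U)⟩ := by
    apply Subtype.ext
    show jp L U (g₂ ⟨jp L U T', jp_mem_left (Ne.symm hT'U)⟩ : P) = jp L U T'
    have hπ2 : (π ⟨jp L U T', jp_mem_left (Ne.symm hT'U)⟩ : L) = jp L V T' :=
      conic_chord hUV hT' hT'U hT'V _ (jp_mem_right (Ne.symm hT'U))
    have hUVT' : U ∉ jp L V T' := off hUκ hVκ hT' (Ne.symm hT'V) hUV (Ne.symm hT'U)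
    have e1 : ml P (jp L V T') (jp L U T') = T' :=
      ml_eq (fun h => hUVT' (by rw [h]; exact jp_mem_left (Ne.symm hT'U)))
        (jp_mem_right (Ne.symm hT'V)) (jp_mem_right (Ne.symm hT'U))
    have hOT' : O ≠ T' := fun h => hOT'V (by rw [h]; exact jp_mem_left hT'V)
    have e2 : ml P (jp L O T') (jp L T' V) = T' :=
      ml_eq (fun h => hOT'V (by rw [← h]; exact jp_mem_left hOT'))
        (jp_mem_right hOT') (jp_mem_left hT'V)
    rw [hval _, hπ2, e1, e2]
  -- fixed line 3 : UV
  have fix3 : Θ kUV = kUV := by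
    apply Subtype.ext
    show jp L U (g₂ kUV : P) = (kUV : L)
    have hvUT' : v ≠ jp L U T' := fun h => hUv (by rw [h]; exact jp_mem_left (Ne.symm hT'U))
    have hM₀v : ml P v (jp L U T') ∈ v := ml_mem_left hvUT'
    have hM₀UT' : ml P v (jp L U T') ∈ jp L U T' := ml_mem_right hvUT'
    have hOM₀ : O ≠ ml P v (jp L U T') := fun h => hOUT' (by rw [h]; exact hM₀UT')
    have e1 : jp L O (ml P v (jp L U T')) = v := jp_eq hOM₀ hOv hM₀v
    have e2 : ml P v (jp L T' V) = V := ml_eq hvT'V hVv (jp_mem_right hT'V)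
    rw [hval _]
    rw [show (π kUV : L) = v from rfl, e1, e2]
  -- apply Axiom T
  have hne12 : ku ≠ ⟨jp L U T', jp_mem_left (Ne.symm hT'U)⟩ := by
    intro h
    have h' : (ku : L) = jp L U T' := congrArg Subtype.val h
    exact hTu (by rw [h']; exact jp_mem_right (Ne.symm hT'U))
  have hne13 : ku ≠ kUV := by
    intro h
    exact huUV (congrArg Subtype.val h).symm
  have hne23 : (⟨jp L U T', jp_mem_left (Ne.symm hT'U)⟩ : {k : L // U ∈ k}) ≠ kUV := by
    intro h
    have h' : jp L U T' = jp L U V := congrArg Subtype.val h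
    exact hT'UV (by rw [← h']; exact jp_mem_right (Ne.symm hT'U))
  have hid := hAxT (.pencil U) Θ hproj
    ⟨ku, ⟨jp L U T', jp_mem_left (Ne.symm hT'U)⟩, kUV, hne12, hne13, hne23, fix1, fix2, fix3⟩
  have hk := congrArg Subtype.val (hid k)
  have hg₂k : (g₂ k : P) ∈ k.1 := by
    rw [show k.1 = jp L U (g₂ k : P) from hk.symm]
    exact jp_mem_right (pt_ne (g₂ k).2 hUT'V)
  have hml : ml P k.1 (jp L T' V) = (g₂ k : P) :=
    ml_eq (line_ne k.2 hUT'V) hg₂k (g₂ k).2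
  rw [hml]
  have : (g₂ k : P) ∈ jp L O (ml P (π k : L) (jp L U T')) :=
    cutMap_mem O (jp L T' V) hOT'V
      ((joinMap O (jp L U T') hOUT' ∘ (cutMap V (jp L U T') hVUT' ∘ π)) k)
  exact this

end PentagonV

end PascalAux

namespace PascalAux

variable {P L}
variable [Configuration.ProjectivePlane P L]

set_option linter.unusedSectionVars false
set_option maxHeartbeats 1000000

section BaseChange

variable {U V : P} {π : {k : L // U ∈ k} → {k : L // V ∈ k}}

/-- Steiner base change : the conic `κ(π;U,V)` induces a projectivity from the
pencil of `U` to the pencil of any other point `T` of the conic, carrying the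
line `UQ` to `TQ` for every conic point `Q`, and the tangent at `U` to `TU`. -/
theorem baseChange (hAxT : AxiomT P L) (hUV : U ≠ V)
    (hπ : IsProj P L (.pencil U) (.pencil V) π) (hnp : ∀ k, (π k : L) ≠ (k : L))
    {T R : P} (hTκ : T ∈ conicSet P L U V π) (hRκ : R ∈ conicSet P L U V π)
    (hTU : T ≠ U) (hTV : T ≠ V) (hRU : R ≠ U) (hRV : R ≠ V) (hTR : T ≠ R) :
    ∃ σ : {k : L // U ∈ k} → {k : L // T ∈ k},
      IsProj P L (.pencil U) (.pencil T) σ ∧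
      (∀ Q : P, Q ∈ conicSet P L U V π → Q ≠ U → Q ≠ T →
        ∀ k : {k : L // U ∈ k}, Q ∈ k.1 → Q ∈ (σ k : L)) ∧
      (∀ k : {k : L // U ∈ k}, (π k : L) = jp L U V → U ∈ (σ k : L)) := by
  obtain ⟨ψ, hψp, hψ1, hψ2⟩ := exists_inverse hπ
  have hUκ := conic_mem_U hUV hπ
  have hVκ := conic_mem_V (π := π) hUV
  have noncol := fun {X Y Z : P} hX hY hZ h1 h2 h3 {m : L} =>
    conic_noncol (X := X) (Y := Y) (Z := Z) hAxT hUV hπ hnp hX hY hZ h1 h2 h3 (m := m)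
  have off := fun {X Y Z : P} hX hY hZ h1 h2 h3 =>
    conic_off (X := X) (Y := Y) (Z := Z) hAxT hUV hπ hnp hX hY hZ h1 h2 h3
  set ku : {k : L // U ∈ k} := ψ ⟨jp L U V, jp_mem_right hUV⟩ with hkudef
  have hku : (π ku : L) = jp L U V := congrArg Subtype.val (hψ2 ⟨jp L U V, jp_mem_right hUV⟩)
  have huUV : jp L U V ≠ (ku : L) := by have := hnp ku; rwa [hku] at this
  have hVu : V ∉ (ku : L) := fun h =>
    huUV (line_unique hUV (jp_mem_left hUV) (jp_mem_right hUV) ku.2 h)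
  have tangent_u : ∀ {Q' : P}, Q' ∈ conicSet P L U V π → Q' ∈ (ku : L) → Q' = U := by
    intro Q' hQ' hQ'u
    by_contra hne
    by_cases hQ'V : Q' = V
    · exact hVu (hQ'V ▸ hQ'u)
    · have hch := conic_chord hUV hQ' hne hQ'V ku hQ'u
      rw [hku] at hch
      refine noncol hUκ hVκ hQ' hUV (Ne.symm hne) (Ne.symm hQ'V)
        (jp_mem_left hUV) (jp_mem_right hUV) ?_
      rw [hch]; exact jp_mem_right (Ne.symm hQ'V)
  have hTu : T ∉ (ku : L) := fun h => hTU (tangent_u hTκ h)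
  have hRu : R ∉ (ku : L) := fun h => hRU (tangent_u hRκ h)
  -- the auxiliary point E₂ = VR·UT
  set kR : {k : L // U ∈ k} := ⟨jp L U R, jp_mem_left (Ne.symm hRU)⟩ with hkRdef
  have hπkR : (π kR : L) = jp L V R :=
    conic_chord hUV hRκ hRU hRV kR (jp_mem_right (Ne.symm hRU))
  set E₂ : P := ml P (π kR : L) (jp L U T) with hE₂def
  have hUVR : U ∉ jp L V R := off hUκ hVκ hRκ (Ne.symm hRV) hUV (Ne.symm hRU)
  have hVRUT : jp L V R ≠ jp L U T := fun h =>
    hUVR (by rw [h]; exact jp_mem_left (Ne.symm hTU))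
  have hE₂VR : E₂ ∈ jp L V R := by rw [hE₂def, hπkR]; exact ml_mem_left hVRUT
  have hE₂UT : E₂ ∈ jp L U T := by rw [hE₂def, hπkR]; exact ml_mem_right hVRUT
  have hE₂U : E₂ ≠ U := fun h => hUVR (by rw [← h]; exact hE₂VR)
  have huUT : (ku : L) ≠ jp L U T := fun h => hTu (by rw [h]; exact jp_mem_right (Ne.symm hTU))
  have hE₂u : E₂ ∉ (ku : L) := fun h =>
    hE₂U (pt_unique huUT h hE₂UT ku.2 (jp_mem_left (Ne.symm hTU)))
  have hRUT : R ∉ jp L U T := off hRκ hUκ hTκ (Ne.symm hTU) hRU (Ne.symm hTR)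
  have hUTUR : jp L U T ≠ jp L U R := fun h =>
    hRUT (by rw [h]; exact jp_mem_right (Ne.symm hRU))
  have hE₂UR : E₂ ∉ jp L U R := fun h =>
    hE₂U (pt_unique hUTUR hE₂UT h (jp_mem_left (Ne.symm hTU)) (jp_mem_left (Ne.symm hRU)))
  have hTUR : T ∉ jp L U R := off hTκ hUκ hRκ (Ne.symm hRU) hTU hTR
  have huUR : (ku : L) ≠ jp L U R := fun h => hRu (by rw [h]; exact jp_mem_right (Ne.symm hRU))
  -- the projectivity
  set σ : {k : L // U ∈ k} → {k : L // T ∈ k} :=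
    joinMap T (jp L U R) hTUR ∘ (cutMap E₂ (jp L U R) hE₂UR ∘
      (joinMap E₂ (ku : L) hE₂u ∘ (cutMap V (ku : L) hVu ∘ π))) with hσdef
  have hproj : IsProj P L (.pencil U) (.pencil T) σ :=
    .comp (.comp (.comp (.comp hπ (cutMap_isProj V (ku : L) hVu))
      (joinMap_isProj E₂ (ku : L) hE₂u))
      (cutMap_isProj E₂ (jp L U R) hE₂UR))
      (joinMap_isProj T (jp L U R) hTUR)
  have hσval : ∀ k : {k : L // U ∈ k},
      (σ k : L) = jp L T (ml P (jp L E₂ (ml P (π k : L) (ku : L))) (jp L U R)) := fun _ => rfl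
  refine ⟨σ, hproj, ?_, ?_⟩
  · -- carries every conic point Q ≠ U, T
    intro Q hQκ hQU hQT k hQk
    have hkk1 : k.1 = jp L U Q :=
      line_unique (Ne.symm hQU) k.2 hQk (jp_mem_left (Ne.symm hQU)) (jp_mem_right (Ne.symm hQU))
    by_cases hQV : Q = V
    · -- Q = V : use the two-tangent pentagon
      have hkk : k = ⟨jp L U V, jp_mem_left hUV⟩ := Subtype.ext (by rw [hkk1, hQV])
      rw [hkk, hQV, hσval _]
      set vv : L := (π ⟨jp L U V, jp_mem_left hUV⟩ : L) with hvvdef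
      have hVvv : V ∈ vv := (π ⟨jp L U V, jp_mem_left hUV⟩).2
      have hvvUV : vv ≠ jp L U V := hnp _
      have hUvv : U ∉ vv := fun h =>
        hvvUV (line_unique hUV h hVvv (jp_mem_left hUV) (jp_mem_right hUV))
      have hvvu : vv ≠ (ku : L) := fun h => hUvv (by rw [h]; exact ku.2)
      set E₁ᵥ : P := ml P vv (ku : L) with hE₁ᵥdef
      have hE₁ᵥvv : E₁ᵥ ∈ vv := ml_mem_left hvvu
      have hE₁ᵥu : E₁ᵥ ∈ (ku : L) := ml_mem_right hvvu
      have hE₁ᵥU : E₁ᵥ ≠ U := fun h => hUvv (by rw [← h]; exact hE₁ᵥvv)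
      have hE₁ᵥE₂ : E₁ᵥ ≠ E₂ := fun h => hE₂u (by rw [← h]; exact hE₁ᵥu)
      have hUTV : U ∉ jp L T V := off hUκ hTκ hVκ hTV (Ne.symm hTU) hUV
      have hne' : jp L U R ≠ jp L T V := line_ne (jp_mem_left (Ne.symm hRU)) hUTV
      have hp1 : ml P (jp L U R) (jp L T V) ∈ jp L U R := ml_mem_left hne'
      have hp2 : ml P (jp L U R) (jp L T V) ∈ jp L T V := ml_mem_right hne'
      have pV := pentagonV hAxT hUV hπ hnp ku hku hTκ hTU hTV kR
      have hne : jp L E₂ E₁ᵥ ≠ jp L U R := fun h =>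
        hE₁ᵥU (pt_unique huUR hE₁ᵥu
          (by rw [← h]; exact jp_mem_right (Ne.symm hE₁ᵥE₂)) ku.2 (jp_mem_left (Ne.symm hRU)))
      have e3 : ml P (jp L E₂ E₁ᵥ) (jp L U R) = ml P (jp L U R) (jp L T V) := by
        refine ml_eq hne ?_ hp1
        rw [jp_comm (Ne.symm hE₁ᵥE₂)]
        exact pV
      have e4 : jp L T (ml P (jp L U R) (jp L T V)) = jp L T V :=
        jp_eq (pt_ne hp1 hTUR) (jp_mem_left hTV) hp2
      rw [e3, e4]
      exact jp_mem_right hTV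
    · -- Q ≠ V : use the pentagon
      have hkk : k = ⟨jp L U Q, jp_mem_left (Ne.symm hQU)⟩ := Subtype.ext hkk1
      rw [hkk, hσval _]
      have hπk : (π ⟨jp L U Q, jp_mem_left (Ne.symm hQU)⟩ : L) = jp L V Q :=
        conic_chord hUV hQκ hQU hQV _ (jp_mem_right (Ne.symm hQU))
      rw [hπk]
      set E₁ : P := ml P (jp L V Q) (ku : L) with hE₁def
      have hVQu : jp L V Q ≠ (ku : L) := line_ne (jp_mem_left (Ne.symm hQV)) hVu
      have hE₁VQ : E₁ ∈ jp L V Q := ml_mem_left hVQu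
      have hE₁u : E₁ ∈ (ku : L) := ml_mem_right hVQu
      have hUVQ : U ∉ jp L V Q := off hUκ hVκ hQκ (Ne.symm hQV) hUV (Ne.symm hQU)
      have hE₁U : E₁ ≠ U := fun h => hUVQ (by rw [← h]; exact hE₁VQ)
      have hE₁E₂ : E₁ ≠ E₂ := fun h => hE₂u (by rw [← h]; exact hE₁u)
      have hUTQ : U ∉ jp L T Q := off hUκ hTκ hQκ (Ne.symm hQT) (Ne.symm hTU) (Ne.symm hQU)
      have hne' : jp L U R ≠ jp L T Q := line_ne (jp_mem_left (Ne.symm hRU)) hUTQ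
      have hp1 : ml P (jp L U R) (jp L T Q) ∈ jp L U R := ml_mem_left hne'
      have hp2 : ml P (jp L U R) (jp L T Q) ∈ jp L T Q := ml_mem_right hne'
      have p5 := pentagon hAxT hUV hπ hnp ku hku hTκ hQκ hTU hTV hQU hQV (Ne.symm hQT) kR
      have hne : jp L E₂ E₁ ≠ jp L U R := fun h =>
        hE₁U (pt_unique huUR hE₁u
          (by rw [← h]; exact jp_mem_right (Ne.symm hE₁E₂)) ku.2 (jp_mem_left (Ne.symm hRU)))
      have e3 : ml P (jp L E₂ E₁) (jp L U R) = ml P (jp L U R) (jp L T Q) := by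
        refine ml_eq hne ?_ hp1
        rw [jp_comm (Ne.symm hE₁E₂)]
        exact p5
      have e4 : jp L T (ml P (jp L U R) (jp L T Q)) = jp L T Q :=
        jp_eq (pt_ne hp1 hTUR) (jp_mem_left (Ne.symm hQT)) hp2
      rw [e3, e4]
      exact jp_mem_right (Ne.symm hQT)
  · -- the tangent at U is carried to TU
    intro k hπk
    rw [hσval _, hπk]
    have e1 : ml P (jp L U V) (ku : L) = U := ml_eq huUV (jp_mem_left hUV) ku.2
    have hne2 : jp L E₂ U ≠ jp L U R := fun h =>
      hE₂UR (by rw [← h]; exact jp_mem_left hE₂U)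
    have e2 : ml P (jp L E₂ U) (jp L U R) = U :=
      ml_eq hne2 (jp_mem_right hE₂U) (jp_mem_left (Ne.symm hRU))
    rw [e1, e2]
    exact jp_mem_right hTU

end BaseChange

end PascalAux

namespace PascalAux

variable {P L}
variable [Configuration.ProjectivePlane P L]

set_option linter.unusedSectionVars false
set_option maxHeartbeats 1000000

/-- inverse of a projectivity between pencils carries the same points -/
theorem carries_inv {A C : P} {σ : {k : L // A ∈ k} → {k : L // C ∈ k}}
    {τ : {k : L // C ∈ k} → {k : L // A ∈ k}}
    (hστ : ∀ x, τ (σ x) = x) (hτσ : ∀ y, σ (τ y) = y)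
    {Q : P} (hQA : Q ≠ A) (hQC : Q ≠ C)
    (hcar : ∀ k : {k : L // A ∈ k}, Q ∈ k.1 → Q ∈ (σ k : L)) :
    ∀ k' : {k : L // C ∈ k}, Q ∈ k'.1 → Q ∈ (τ k' : L) := by
  intro k' hQk'
  have h1 : Q ∈ (σ ⟨jp L A Q, jp_mem_left (Ne.symm hQA)⟩ : L) :=
    hcar _ (jp_mem_right (Ne.symm hQA))
  have h2 : Q ∈ (σ (τ k') : L) := by rw [hτσ k']; exact hQk'
  have heq : σ (τ k') = σ ⟨jp L A Q, jp_mem_left (Ne.symm hQA)⟩ :=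
    Subtype.ext (line_unique (Ne.symm hQC) (σ (τ k')).2 h2
      (σ ⟨jp L A Q, jp_mem_left (Ne.symm hQA)⟩).2 h1)
  have h3 := congrArg τ heq
  rw [hστ, hστ] at h3
  rw [h3]
  show Q ∈ jp L A Q
  exact jp_mem_right (Ne.symm hQA)

section Steiner

variable {U V : P} {π : {k : L // U ∈ k} → {k : L // V ∈ k}}

/-- **Steiner's theorem** : given four distinct points of the conic, for any two
distinct points `A`, `C` of the conic there is a projectivity from the pencil of
`A` to the pencil of `C` carrying `AQ` to `CQ` for every conic point `Q`. -/
theorem steiner (hAxT : AxiomT P L) (hUV : U ≠ V)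
    (hπ : IsProj P L (.pencil U) (.pencil V) π) (hnp : ∀ k, (π k : L) ≠ (k : L))
    (G₁ G₂ G₃ G₄ : P)
    (hG1 : G₁ ∈ conicSet P L U V π) (hG2 : G₂ ∈ conicSet P L U V π)
    (hG3 : G₃ ∈ conicSet P L U V π) (hG4 : G₄ ∈ conicSet P L U V π)
    (h12 : G₁ ≠ G₂) (h13 : G₁ ≠ G₃) (h14 : G₁ ≠ G₄)
    (h23 : G₂ ≠ G₃) (h24 : G₂ ≠ G₄) (h34 : G₃ ≠ G₄)
    {A C : P} (hAκ : A ∈ conicSet P L U V π) (hCκ : C ∈ conicSet P L U V π)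
    (hAC : A ≠ C) :
    ∃ σ : {k : L // A ∈ k} → {k : L // C ∈ k},
      IsProj P L (.pencil A) (.pencil C) σ ∧
      ∀ Q : P, Q ∈ conicSet P L U V π → Q ≠ A → Q ≠ C →
        ∀ k : {k : L // A ∈ k}, Q ∈ k.1 → Q ∈ (σ k : L) := by
  obtain ⟨ψ, hψp, hψ1, hψ2⟩ := exists_inverse hπ
  have pick : ∀ a b c : P, ∃ R : P, R ∈ conicSet P L U V π ∧ R ≠ a ∧ R ≠ b ∧ R ≠ c := by
    intro a b c
    by_cases h1 : G₁ ≠ a ∧ G₁ ≠ b ∧ G₁ ≠ c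
    · exact ⟨G₁, hG1, h1.1, h1.2.1, h1.2.2⟩
    by_cases h2 : G₂ ≠ a ∧ G₂ ≠ b ∧ G₂ ≠ c
    · exact ⟨G₂, hG2, h2.1, h2.2.1, h2.2.2⟩
    by_cases h3 : G₃ ≠ a ∧ G₃ ≠ b ∧ G₃ ≠ c
    · exact ⟨G₃, hG3, h3.1, h3.2.1, h3.2.2⟩
    by_cases h4 : G₄ ≠ a ∧ G₄ ≠ b ∧ G₄ ≠ c
    · exact ⟨G₄, hG4, h4.1, h4.2.1, h4.2.2⟩
    exfalso
    have m1 : G₁ = a ∨ G₁ = b ∨ G₁ = c := by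
      by_contra hc; push_neg at hc; exact h1 ⟨hc.1, hc.2.1, hc.2.2⟩
    have m2 : G₂ = a ∨ G₂ = b ∨ G₂ = c := by
      by_contra hc; push_neg at hc; exact h2 ⟨hc.1, hc.2.1, hc.2.2⟩
    have m3 : G₃ = a ∨ G₃ = b ∨ G₃ = c := by
      by_contra hc; push_neg at hc; exact h3 ⟨hc.1, hc.2.1, hc.2.2⟩
    have m4 : G₄ = a ∨ G₄ = b ∨ G₄ = c := by
      by_contra hc; push_neg at hc; exact h4 ⟨hc.1, hc.2.1, hc.2.2⟩
    rcases m1 with rfl | rfl | rfl <;> rcases m2 with rfl | rfl | rfl <;>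
      rcases m3 with rfl | rfl | rfl <;> rcases m4 with rfl | rfl | rfl <;> simp_all
  have hπcar : ∀ Q : P, Q ∈ conicSet P L U V π → Q ≠ U → Q ≠ V →
      ∀ k : {k : L // U ∈ k}, Q ∈ k.1 → Q ∈ (π k : L) := by
    intro Q hQ hQU hQV k hk
    rw [conic_chord hUV hQ hQU hQV k hk]
    exact jp_mem_right (Ne.symm hQV)
  by_cases hAU : A = U
  · subst hAU  -- now U is replaced by A
    by_cases hCV : C = V
    · subst hCV  -- now V is replaced by C
      exact ⟨π, hπ, fun Q hQ hQ1 hQ2 k hk => hπcar Q hQ hQ1 hQ2 k hk⟩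
    · obtain ⟨R, hRκ, hR1, hRV, hRC⟩ := pick A V C
      obtain ⟨σC, hσCp, hσCcar, hσCu⟩ :=
        baseChange hAxT hUV hπ hnp hCκ hRκ (Ne.symm hAC) hCV hR1 hRV (Ne.symm hRC)
      exact ⟨σC, hσCp, fun Q hQ hQ1 hQ2 k hk => hσCcar Q hQ hQ1 hQ2 k hk⟩
  by_cases hAV : A = V
  · subst hAV  -- now V is replaced by A
    by_cases hCU : C = U
    · subst hCU  -- now U is replaced by C
      refine ⟨ψ, hψp, ?_⟩
      intro Q hQ hQA hQC k hk
      exact carries_inv hψ1 hψ2 hQC hQA (hπcar Q hQ hQC hQA) k hk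
    · obtain ⟨R, hRκ, hRU, hRA, hRC⟩ := pick U A C
      obtain ⟨σC, hσCp, hσCcar, hσCu⟩ :=
        baseChange hAxT hUV hπ hnp hCκ hRκ hCU (Ne.symm hAC) hRU hRA (Ne.symm hRC)
      refine ⟨σC ∘ ψ, .comp hψp hσCp, ?_⟩
      intro Q hQ hQA hQC k hk
      by_cases hQU : Q = U
      · have hkUV : (k : L) = jp L U A := by
          rw [hQU] at hk
          exact line_unique hUV hk k.2 (jp_mem_left hUV) (jp_mem_right hUV)
        have hπψk : (π (ψ k) : L) = jp L U A := by
          rw [congrArg Subtype.val (hψ2 k)]; exact hkUV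
        show Q ∈ (σC (ψ k) : L)
        rw [hQU]
        exact hσCu (ψ k) hπψk
      · exact hσCcar Q hQ hQU hQC (ψ k) (carries_inv hψ1 hψ2 hQU hQA (hπcar Q hQ hQU hQA) k hk)
  · -- A is neither U nor V
    obtain ⟨RA, hRAκ, hRAU, hRAV, hRAA⟩ := pick U V A
    obtain ⟨σA, hσAp, hσAcar, hσAu⟩ :=
      baseChange hAxT hUV hπ hnp hAκ hRAκ hAU hAV hRAU hRAV (Ne.symm hRAA)
    obtain ⟨τA, hτAp, hτ1, hτ2⟩ := exists_inverse hσAp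
    have hτAcar : ∀ Q : P, Q ∈ conicSet P L U V π → Q ≠ U → Q ≠ A →
        ∀ k : {k : L // A ∈ k}, Q ∈ k.1 → Q ∈ (τA k : L) :=
      fun Q hQ hQU hQA => carries_inv hτ1 hτ2 hQU hQA (hσAcar Q hQ hQU hQA)
    -- the tangent trick for Q = U
    have hUtrick : ∀ k : {k : L // A ∈ k}, U ∈ k.1 →
        (π (τA k) : L) = jp L U V ∧ τA k = ψ ⟨jp L U V, jp_mem_right hUV⟩ := by
      intro k hUk
      set k₀ : {k : L // U ∈ k} := ψ ⟨jp L U V, jp_mem_right hUV⟩ with hk₀def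
      have hπk₀ : (π k₀ : L) = jp L U V := congrArg Subtype.val (hψ2 _)
      have hUσ : U ∈ (σA k₀ : L) := hσAu k₀ hπk₀
      have hkeq : k = σA k₀ :=
        Subtype.ext (line_unique hAU k.2 hUk (σA k₀).2 hUσ)
      have hτk : τA k = k₀ := by rw [hkeq, hτ1]
      constructor
      · rw [hτk]; exact hπk₀
      · exact hτk
    by_cases hCU : C = U
    · subst hCU  -- now U is replaced by C
      exact ⟨τA, hτAp, fun Q hQ hQA hQC => hτAcar Q hQ hQC hQA⟩
    by_cases hCV : C = V
    · subst hCV  -- now V is replaced by C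
      refine ⟨π ∘ τA, .comp hτAp hπ, ?_⟩
      intro Q hQ hQA hQC k hk
      by_cases hQU : Q = U
      · show Q ∈ (π (τA k) : L)
        rw [hQU]
        rw [show (π (τA k) : L) = jp L U C from (hUtrick k (by rw [hQU] at hk; exact hk)).1]
        exact jp_mem_left hUV
      · exact hπcar Q hQ hQU hQC (τA k) (hτAcar Q hQ hQU hQA k hk)
    · obtain ⟨RC, hRCκ, hRCU, hRCV, hRCC⟩ := pick U V C
      obtain ⟨σC, hσCp, hσCcar, hσCu⟩ :=
        baseChange hAxT hUV hπ hnp hCκ hRCκ hCU hCV hRCU hRCV (Ne.symm hRCC)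
      refine ⟨σC ∘ τA, .comp hτAp hσCp, ?_⟩
      intro Q hQ hQA hQC k hk
      by_cases hQU : Q = U
      · obtain ⟨hπτ, hτval⟩ := hUtrick k (by rw [hQU] at hk; exact hk)
        show Q ∈ (σC (τA k) : L)
        rw [hQU]
        exact hσCu (τA k) hπτ
      · exact hσCcar Q hQ hQU hQC (τA k) (hτAcar Q hQ hQU hQA k hk)

end Steiner

end PascalAux

open PascalAux

/-- **Corollary to Pascal's Theorem.** Let `A, B, C, D, E` be five distinct
points of a conic `κ`.  If `l` is a line through `E` that avoids each of
`A, B, C, D`, and `l` passes through a sixth point `F` of `κ` distinct from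
each of `A, B, C, D, E`, then `F = l·(A(CD·XY))` where `X = AB·DE` and
`Y = BC·l`. -/
theorem pascal_corollary
    [Configuration.ProjectivePlane P L]
    (h6 : LinesHaveAtLeast P L 6) (hT : AxiomT P L)
    (κ : Set P) (hκ : IsConic P L κ)
    (A B C D E : P)
    (hAκ : A ∈ κ) (hBκ : B ∈ κ) (hCκ : C ∈ κ) (hDκ : D ∈ κ) (hEκ : E ∈ κ)
    (hAB : A ≠ B) (hAC : A ≠ C) (hAD : A ≠ D) (hAE : A ≠ E)
    (hBC : B ≠ C) (hBD : B ≠ D) (hBE : B ≠ E)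
    (hCD : C ≠ D) (hCE : C ≠ E) (hDE : D ≠ E)
    (l : L) (hEl : E ∈ l) (hAl : A ∉ l) (hBl : B ∉ l) (hCl : C ∉ l) (hDl : D ∉ l)
    (F : P) (hFκ : F ∈ κ) (hFl : F ∈ l)
    (hFA : F ≠ A) (hFB : F ≠ B) (hFC : F ≠ C) (hFD : F ≠ D) (hFE : F ≠ E) :
    ∀ lab lde : L, A ∈ lab → B ∈ lab → D ∈ lde → E ∈ lde →
      ∀ X : P, X ∈ lab → X ∈ lde →
        ∀ lbc : L, B ∈ lbc → C ∈ lbc →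
          ∀ Y : P, Y ∈ lbc → Y ∈ l →
            ∀ lxy : L, X ∈ lxy → Y ∈ lxy →
              ∀ lcd : L, C ∈ lcd → D ∈ lcd →
                ∀ W : P, W ∈ lcd → W ∈ lxy →
                  ∀ law : L, A ∈ law → W ∈ law →
                    law ≠ l ∧ F ∈ law := by
  intro lab lde hAab hBab hDde hEde X hXab hXde lbc hBbc hCbc Y hYbc hYl
    lxy hXxy hYxy lcd hCcd hDcd W hWcd hWxy law hAlaw hWlaw
  obtain ⟨U, V, π, hUV, hπ, hnp, hκeq⟩ := hκ
  subst hκeq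
  have noncol3 := fun {X' Y' Z' : P} hX hY hZ h1 h2 h3 {m : L} =>
    conic_noncol (X := X') (Y := Y') (Z := Z') hT hUV hπ hnp hX hY hZ h1 h2 h3 (m := m)
  -- nonincidence facts
  have hAlde : A ∉ lde := fun h => noncol3 hAκ hDκ hEκ hAD hAE hDE h hDde hEde
  have hClde : C ∉ lde := fun h => noncol3 hCκ hDκ hEκ hCD hCE hDE h hDde hEde
  have hFlde : F ∉ lde := fun h => noncol3 hFκ hDκ hEκ hFD hFE hDE h hDde hEde
  have hAlcd : A ∉ lcd := fun h => noncol3 hAκ hCκ hDκ hAC hAD hCD h hCcd hDcd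
  have hBlcd : B ∉ lcd := fun h => noncol3 hBκ hCκ hDκ hBC hBD hCD h hCcd hDcd
  have hXD : X ≠ D := fun h => noncol3 hAκ hBκ hDκ hAB hAD hBD hAab hBab (h ▸ hXab)
  have hXE : X ≠ E := fun h => noncol3 hAκ hBκ hEκ hAB hAE hBE hAab hBab (h ▸ hXab)
  have hXA : X ≠ A := fun h => hAlde (h ▸ hXde)
  have hYE : Y ≠ E := fun h => noncol3 hBκ hCκ hEκ hBC hBE hCE hBbc hCbc (h ▸ hYbc)
  have hldel : lde ≠ l := line_ne hDde hDl
  have hlxyl : lxy ≠ l := fun h => hXE (pt_unique hldel hXde (h ▸ hXxy) hEde hEl)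
  have hWlde : W ∉ lde := by
    intro h
    have hlcdlde : lcd ≠ lde := line_ne hCcd hClde
    have hWD : W = D := pt_unique hlcdlde hWcd h hDcd hDde
    have hDxy : D ∈ lxy := hWD ▸ hWxy
    have hlxylde : lxy = lde := line_unique hXD hXxy hDxy hXde hDde
    have hYlde : Y ∈ lde := hlxylde ▸ hYxy
    exact hYE (pt_unique hldel hYlde hYl hEde hEl)
  have hWl : W ∉ l := by
    intro h
    have hWY : W = Y := pt_unique hlxyl hWxy h hYxy hYl
    have hYlcd : Y ∈ lcd := hWY ▸ hWcd
    have hlbclcd : lbc ≠ lcd := line_ne hBbc hBlcd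
    have hYC : Y = C := pt_unique hlbclcd hYbc hYlcd hCbc hCcd
    exact hCl (hYC ▸ hYl)
  have hWX : W ≠ X := fun h => hWlde (h ▸ hXde)
  have hWD' : W ≠ D := fun h => hWlde (h ▸ hDde)
  have hWE : W ≠ E := fun h => hWlde (h ▸ hEde)
  have hAW : A ≠ W := fun h => hAlcd (by rw [h]; exact hWcd)
  -- the point M = FA·DE
  have hFAlde : jp L F A ≠ lde := line_ne (jp_mem_left hFA) hFlde
  have hM1 : ml P (jp L F A) lde ∈ jp L F A := ml_mem_left hFAlde
  have hM2 : ml P (jp L F A) lde ∈ lde := ml_mem_right hFAlde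
  have hMA : ml P (jp L F A) lde ≠ A := fun h => hAlde (h ▸ hM2)
  have hMF : ml P (jp L F A) lde ≠ F := fun h => hFlde (h ▸ hM2)
  have hWM : W ≠ ml P (jp L F A) lde := fun h => hWlde (by rw [h]; exact hM2)
  -- Steiner projectivity from the pencil of A to the pencil of C
  obtain ⟨σ, hσp, hσcar⟩ := steiner hT hUV hπ hnp B D E F hBκ hDκ hEκ hFκ
    hBD hBE (Ne.symm hFB) hDE (Ne.symm hFD) (Ne.symm hFE) hAκ hCκ hAC
  -- the projectivity φ : range lde → range l
  have hφp : IsProj P L (.range lde) (.range l)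
      (cutMap C l hCl ∘ (σ ∘ joinMap A lde hAlde)) :=
    .comp (.comp (joinMap_isProj A lde hAlde) hσp) (cutMap_isProj C l hCl)
  -- the perspectivity g with centre W and its inverse
  obtain ⟨g', hg'p, hg1, hg2⟩ := exists_inverse (perspMap_isProj W lde l hWlde hWl)
  -- value computations
  have hφD : (cutMap C l hCl ∘ (σ ∘ joinMap A lde hAlde)) ⟨D, hDde⟩ =
      perspMap W lde l hWlde hWl ⟨D, hDde⟩ := by
    apply Subtype.ext
    have hDj : D ∈ (joinMap A lde hAlde ⟨D, hDde⟩ : L) := joinMap_mem A lde hAlde ⟨D, hDde⟩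
    have hDσ : D ∈ (σ (joinMap A lde hAlde ⟨D, hDde⟩) : L) :=
      hσcar D hDκ (Ne.symm hAD) (Ne.symm hCD) _ hDj
    have hσDlcd : (σ (joinMap A lde hAlde ⟨D, hDde⟩) : L) = lcd :=
      line_unique hCD (σ _).2 hDσ hCcd hDcd
    show ml P (σ (joinMap A lde hAlde ⟨D, hDde⟩) : L) l = ml P (jp L W D) l
    rw [hσDlcd, jp_eq hWD' hWcd hDcd]
  have hφE : (cutMap C l hCl ∘ (σ ∘ joinMap A lde hAlde)) ⟨E, hEde⟩ = ⟨E, hEl⟩ := by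
    apply Subtype.ext
    have hEj : E ∈ (joinMap A lde hAlde ⟨E, hEde⟩ : L) := joinMap_mem A lde hAlde ⟨E, hEde⟩
    have hEσ : E ∈ (σ (joinMap A lde hAlde ⟨E, hEde⟩) : L) :=
      hσcar E hEκ (Ne.symm hAE) (Ne.symm hCE) _ hEj
    show ml P (σ (joinMap A lde hAlde ⟨E, hEde⟩) : L) l = E
    exact ml_eq (line_ne (σ _).2 hCl) hEσ hEl
  have hgE : perspMap W lde l hWlde hWl ⟨E, hEde⟩ = ⟨E, hEl⟩ := by
    apply Subtype.ext
    show ml P (jp L W E) l = E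
    exact ml_eq (line_ne (jp_mem_left hWE) hWl) (jp_mem_right hWE) hEl
  have hφX : (cutMap C l hCl ∘ (σ ∘ joinMap A lde hAlde)) ⟨X, hXde⟩ = ⟨Y, hYl⟩ := by
    apply Subtype.ext
    have hjX : (joinMap A lde hAlde ⟨X, hXde⟩ : L) = lab := jp_eq (Ne.symm hXA) hAab hXab
    have hBj : B ∈ (joinMap A lde hAlde ⟨X, hXde⟩ : L) := by rw [hjX]; exact hBab
    have hBσ : B ∈ (σ (joinMap A lde hAlde ⟨X, hXde⟩) : L) :=
      hσcar B hBκ (Ne.symm hAB) hBC _ hBj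
    have hσXlbc : (σ (joinMap A lde hAlde ⟨X, hXde⟩) : L) = lbc :=
      line_unique hBC hBσ (σ _).2 hBbc hCbc
    show ml P (σ (joinMap A lde hAlde ⟨X, hXde⟩) : L) l = Y
    rw [hσXlbc]
    exact ml_eq (line_ne hBbc hBl) hYbc hYl
  have hgX : perspMap W lde l hWlde hWl ⟨X, hXde⟩ = ⟨Y, hYl⟩ := by
    apply Subtype.ext
    show ml P (jp L W X) l = Y
    rw [jp_eq hWX hWxy hXxy]
    exact ml_eq hlxyl hYxy hYl
  have hφM : (cutMap C l hCl ∘ (σ ∘ joinMap A lde hAlde)) ⟨ml P (jp L F A) lde, hM2⟩ =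
      ⟨F, hFl⟩ := by
    apply Subtype.ext
    have hjM : (joinMap A lde hAlde ⟨ml P (jp L F A) lde, hM2⟩ : L) = jp L F A :=
      jp_eq (Ne.symm hMA) (jp_mem_right hFA) hM1
    have hFj : F ∈ (joinMap A lde hAlde ⟨ml P (jp L F A) lde, hM2⟩ : L) := by
      rw [hjM]; exact jp_mem_left hFA
    have hFσ : F ∈ (σ (joinMap A lde hAlde ⟨ml P (jp L F A) lde, hM2⟩) : L) :=
      hσcar F hFκ hFA hFC _ hFj
    show ml P (σ (joinMap A lde hAlde ⟨ml P (jp L F A) lde, hM2⟩) : L) l = F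
    exact ml_eq (line_ne (σ _).2 hCl) hFσ hFl
  -- apply Axiom T to g' ∘ φ
  have hfix1 : (g' ∘ (cutMap C l hCl ∘ (σ ∘ joinMap A lde hAlde))) ⟨D, hDde⟩ = ⟨D, hDde⟩ := by
    show g' ((cutMap C l hCl ∘ (σ ∘ joinMap A lde hAlde)) ⟨D, hDde⟩) = ⟨D, hDde⟩
    rw [hφD]; exact hg1 _
  have hfix2 : (g' ∘ (cutMap C l hCl ∘ (σ ∘ joinMap A lde hAlde))) ⟨E, hEde⟩ = ⟨E, hEde⟩ := by
    show g' ((cutMap C l hCl ∘ (σ ∘ joinMap A lde hAlde)) ⟨E, hEde⟩) = ⟨E, hEde⟩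
    rw [hφE, ← hgE]; exact hg1 _
  have hfix3 : (g' ∘ (cutMap C l hCl ∘ (σ ∘ joinMap A lde hAlde))) ⟨X, hXde⟩ = ⟨X, hXde⟩ := by
    show g' ((cutMap C l hCl ∘ (σ ∘ joinMap A lde hAlde)) ⟨X, hXde⟩) = ⟨X, hXde⟩
    rw [hφX, ← hgX]; exact hg1 _
  have hne1 : (⟨D, hDde⟩ : {X' : P // X' ∈ lde}) ≠ ⟨E, hEde⟩ :=
    fun h => hDE (congrArg Subtype.val h)
  have hne2 : (⟨D, hDde⟩ : {X' : P // X' ∈ lde}) ≠ ⟨X, hXde⟩ :=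
    fun h => hXD (congrArg Subtype.val h).symm
  have hne3 : (⟨E, hEde⟩ : {X' : P // X' ∈ lde}) ≠ ⟨X, hXde⟩ :=
    fun h => hXE (congrArg Subtype.val h).symm
  have hid := hT (.range lde) (g' ∘ (cutMap C l hCl ∘ (σ ∘ joinMap A lde hAlde)))
    (.comp hφp hg'p)
    ⟨⟨D, hDde⟩, ⟨E, hEde⟩, ⟨X, hXde⟩, hne1, hne2, hne3, hfix1, hfix2, hfix3⟩
  have hidM := hid ⟨ml P (jp L F A) lde, hM2⟩
  have hMeq : (cutMap C l hCl ∘ (σ ∘ joinMap A lde hAlde)) ⟨ml P (jp L F A) lde, hM2⟩ =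
      perspMap W lde l hWlde hWl ⟨ml P (jp L F A) lde, hM2⟩ := by
    have h1 := congrArg (perspMap W lde l hWlde hWl) hidM
    rw [show (g' ∘ (cutMap C l hCl ∘ (σ ∘ joinMap A lde hAlde))) ⟨ml P (jp L F A) lde, hM2⟩ =
      g' ((cutMap C l hCl ∘ (σ ∘ joinMap A lde hAlde)) ⟨ml P (jp L F A) lde, hM2⟩) from rfl,
      hg2] at h1
    exact h1
  have hFval : (⟨F, hFl⟩ : {X' : P // X' ∈ l}) =
      perspMap W lde l hWlde hWl ⟨ml P (jp L F A) lde, hM2⟩ := hφM.symm.trans hMeq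
  have hF2 : F = ml P (jp L W (ml P (jp L F A) lde)) l := congrArg Subtype.val hFval
  have hWMl : jp L W (ml P (jp L F A) lde) ≠ l := line_ne (jp_mem_left hWM) hWl
  have hFWM : F ∈ jp L W (ml P (jp L F A) lde) := by
    have h0 := ml_mem_left hWMl
    rwa [← hF2] at h0
  have hWMFA : jp L W (ml P (jp L F A) lde) = jp L F A :=
    line_unique (Ne.symm hMF) hFWM (jp_mem_right hWM) (jp_mem_left hFA) hM1
  have hWFA : W ∈ jp L F A := by rw [← hWMFA]; exact jp_mem_left hWM
  have hlawFA : law = jp L F A := line_unique hAW hAlaw hWlaw (jp_mem_right hFA) hWFA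
  constructor
  · exact line_ne hAlaw hAl
  · rw [hlawFA]; exact jp_mem_left hFA
end

section
/- Any three distinct points of a conic are noncollinear. -/
open Configuration

universe u
variable (P L : Type u) [Membership P L]

section Aux

open Configuration.HasPoints Configuration.HasLines Configuration.Nondegenerate

variable {P L}

/-- Projectivities are injective. -/
theorem isProj_injective [Configuration.ProjectivePlane P L]
    {a b : Obj P L} {f : a.Carrier → b.Carrier} (h : IsProj P L a b f) :
    Function.Injective f := by
  induction h with
  | @persp l m f h =>
    obtain ⟨O, hOl, hOm, hf⟩ := h
    intro x y hxy
    obtain ⟨k1, hO1, hx1, hf1⟩ := hf x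
    obtain ⟨k2, hO2, hy2, hf2⟩ := hf y
    rw [← hxy] at hf2
    have hfO : (f x : P) ≠ O := fun h' => hOm (h' ▸ (f x).2)
    have hk : k1 = k2 := (eq_or_eq hf1 hO1 hf2 hO2).resolve_left hfO
    rw [← hk] at hy2
    have hkl : k1 ≠ l := fun h' => hOl (h' ▸ hO1)
    exact Subtype.ext ((eq_or_eq hx1 hy2 x.2 y.2).resolve_right hkl)
  | @elem U l f h =>
    obtain ⟨hUl, hf⟩ := h
    intro k1 k2 hk
    have h2 : (f k1 : P) ∈ (k2 : L) := hk ▸ hf k2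
    have hne : (f k1 : P) ≠ U := fun h' => hUl (h' ▸ (f k1).2)
    exact Subtype.ext ((eq_or_eq (hf k1) k1.2 h2 k2.2).resolve_left hne)
  | @elemInv U l f h =>
    obtain ⟨hUl, hf⟩ := h
    intro x y hxy
    have h2 : (y : P) ∈ ((f x : L)) := hxy ▸ hf y
    have hne : ((f x : L)) ≠ l := fun h' => hUl (h' ▸ (f x).2)
    exact Subtype.ext ((eq_or_eq (hf x) h2 x.2 y.2).resolve_right hne)
  | comp _ _ ih1 ih2 => exact Function.Injective.comp ih2 ih1

end Aux

/-- **Any three distinct points of a conic are noncollinear.** -/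
theorem conic_three_points_noncollinear
    [Configuration.ProjectivePlane P L]
    (h6 : LinesHaveAtLeast P L 6) (hT : AxiomT P L)
    (κ : Set P) (hκ : IsConic P L κ)
    (X Y Z : P) (hX : X ∈ κ) (hY : Y ∈ κ) (hZ : Z ∈ κ)
    (hXY : X ≠ Y) (hXZ : X ≠ Z) (hYZ : Y ≠ Z) :
    ¬ Col P L X Y Z := by
  rintro ⟨g, hXg, hYg, hZg⟩
  obtain ⟨U, V, π, hUV, hπ, hnp, rfl⟩ := hκ
  classical
  -- helper: pick an element among X,Y,Z avoiding two values
  have pick1 : ∀ u v : P, ∃ A : P, (A = X ∨ A = Y ∨ A = Z) ∧ A ≠ u ∧ A ≠ v := by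
    intro u v
    by_cases hXu : X = u
    · by_cases hYv : Y = v
      · exact ⟨Z, Or.inr (Or.inr rfl), fun h => hXZ (hXu.trans h.symm),
          fun h => hYZ (hYv.trans h.symm)⟩
      · exact ⟨Y, Or.inr (Or.inl rfl), fun h => hXY (hXu.trans h.symm), hYv⟩
    · by_cases hXv : X = v
      · by_cases hYu : Y = u
        · exact ⟨Z, Or.inr (Or.inr rfl), fun h => hYZ (hYu.trans h.symm),
            fun h => hXZ (hXv.trans h.symm)⟩
        · by_cases hYv : Y = v
          · exact ⟨Y, Or.inr (Or.inl rfl), hYu, fun h => hXY (hXv.trans h.symm)⟩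
          · exact ⟨Y, Or.inr (Or.inl rfl), hYu, hYv⟩
      · exact ⟨X, Or.inl rfl, hXu, hXv⟩
  have pick2 : ∀ u : P, ∃ A B : P, A ≠ B ∧ (A = X ∨ A = Y ∨ A = Z) ∧
      (B = X ∨ B = Y ∨ B = Z) ∧ A ≠ u ∧ B ≠ u := by
    intro u
    by_cases hXu : X = u
    · exact ⟨Y, Z, hYZ, Or.inr (Or.inl rfl), Or.inr (Or.inr rfl),
        fun h => hXY (hXu.trans h.symm), fun h => hXZ (hXu.trans h.symm)⟩
    · by_cases hYu : Y = u
      · exact ⟨X, Z, hXZ, Or.inl rfl, Or.inr (Or.inr rfl), hXu,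
          fun h => hYZ (hYu.trans h.symm)⟩
      · exact ⟨X, Y, hXY, Or.inl rfl, Or.inr (Or.inl rfl), hXu, hYu⟩
  have memg : ∀ A : P, (A = X ∨ A = Y ∨ A = Z) → A ∈ g := by
    rintro A (rfl | rfl | rfl) <;> assumption
  have memκ : ∀ A : P, (A = X ∨ A = Y ∨ A = Z) → A ∈ conicSet P L U V π := by
    rintro A (rfl | rfl | rfl) <;> assumption
  by_cases hUg : U ∈ g <;> by_cases hVg : V ∈ g
  · -- U ∈ g and V ∈ g
    obtain ⟨A, hA, hAU, hAV⟩ := pick1 U V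
    obtain ⟨k, hAk, hAπ⟩ := memκ A hA
    have hkg : (k : L) = g :=
      (Configuration.Nondegenerate.eq_or_eq hAk k.2 (memg A hA) hUg).resolve_left hAU
    have hπg : ((π k : L)) = g :=
      (Configuration.Nondegenerate.eq_or_eq hAπ (π k).2 (memg A hA) hVg).resolve_left hAV
    exact hnp k (hπg.trans hkg.symm)
  · -- U ∈ g, V ∉ g
    obtain ⟨A, B, hAB, hA, hB, hAU, hBU⟩ := pick2 U
    obtain ⟨k, hAk, hAπ⟩ := memκ A hA
    obtain ⟨k', hBk, hBπ⟩ := memκ B hB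
    have hkg : (k : L) = g :=
      (Configuration.Nondegenerate.eq_or_eq hAk k.2 (memg A hA) hUg).resolve_left hAU
    have hkg' : (k' : L) = g :=
      (Configuration.Nondegenerate.eq_or_eq hBk k'.2 (memg B hB) hUg).resolve_left hBU
    have hkk : k = k' := Subtype.ext (hkg.trans hkg'.symm)
    rw [← hkk] at hBπ
    have hπg : ((π k : L)) ≠ g := fun h => hVg (h ▸ (π k).2)
    exact hAB ((Configuration.Nondegenerate.eq_or_eq hAπ hBπ (memg A hA)
      (memg B hB)).resolve_right hπg)
  · -- U ∉ g, V ∈ g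
    obtain ⟨A, B, hAB, hA, hB, hAV, hBV⟩ := pick2 V
    obtain ⟨k, hAk, hAπ⟩ := memκ A hA
    obtain ⟨k', hBk, hBπ⟩ := memκ B hB
    have hπg : ((π k : L)) = g :=
      (Configuration.Nondegenerate.eq_or_eq hAπ (π k).2 (memg A hA) hVg).resolve_left hAV
    have hπg' : ((π k' : L)) = g :=
      (Configuration.Nondegenerate.eq_or_eq hBπ (π k').2 (memg B hB) hVg).resolve_left hBV
    have hkk : k = k' := isProj_injective hπ (Subtype.ext (hπg.trans hπg'.symm))
    rw [← hkk] at hBk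
    have hkgne : (k : L) ≠ g := fun h => hUg (h ▸ k.2)
    exact hAB ((Configuration.Nondegenerate.eq_or_eq hAk hBk (memg A hA)
      (memg B hB)).resolve_right hkgne)
  · -- main case : U ∉ g, V ∉ g
    have hUne : ∀ A : {A : P // A ∈ g}, U ≠ (A : P) := fun A h => hUg (h ▸ A.2)
    have hVne : ∀ k : {k : L // V ∈ k}, (k : L) ≠ g := fun k h => hVg (h ▸ k.2)
    set f₁ : {A : P // A ∈ g} → {k : L // U ∈ k} :=
      fun A => ⟨Configuration.HasLines.mkLine (hUne A),
        (Configuration.HasLines.mkLine_ax (hUne A)).1⟩ with hf₁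
    set f₂ : {k : L // V ∈ k} → {A : P // A ∈ g} :=
      fun k => ⟨Configuration.HasPoints.mkPoint (hVne k),
        (Configuration.HasPoints.mkPoint_ax (hVne k)).2⟩ with hf₂
    have hρ : IsProj P L (.range g) (.range g) (f₂ ∘ π ∘ f₁) :=
      IsProj.comp
        (IsProj.comp
          (IsProj.elemInv ⟨hUg, fun A => (Configuration.HasLines.mkLine_ax (hUne A)).2⟩) hπ)
        (IsProj.elem ⟨hVg, fun k => (Configuration.HasPoints.mkPoint_ax (hVne k)).1⟩)
    have fix : ∀ A : {A : P // A ∈ g}, (A : P) ∈ conicSet P L U V π →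
        (f₂ ∘ π ∘ f₁) A = A := by
      intro A hA
      obtain ⟨k, hAk, hAπ⟩ := hA
      have hk : f₁ A = k := Subtype.ext
        ((Configuration.Nondegenerate.eq_or_eq
          (Configuration.HasLines.mkLine_ax (hUne A)).1
          (Configuration.HasLines.mkLine_ax (hUne A)).2 k.2 hAk).resolve_left (hUne A))
      show f₂ (π (f₁ A)) = A
      rw [hk]
      exact Subtype.ext ((Configuration.Nondegenerate.eq_or_eq
        (Configuration.HasPoints.mkPoint_ax (hVne (π k))).1 hAπ
        (Configuration.HasPoints.mkPoint_ax (hVne (π k))).2 A.2).resolve_right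
          (hVne (π k)))
    have hid : ∀ w, (f₂ ∘ π ∘ f₁) w = w := by
      apply hT (.range g) _ hρ
      refine ⟨⟨X, hXg⟩, ⟨Y, hYg⟩, ⟨Z, hZg⟩, ?_, ?_, ?_, fix _ hX, fix _ hY, fix _ hZ⟩
      · exact fun h => hXY (congrArg Subtype.val h)
      · exact fun h => hXZ (congrArg Subtype.val h)
      · exact fun h => hYZ (congrArg Subtype.val h)
    -- get a contradiction with nonperspectivity at W = g · (UV)
    set uv : L := Configuration.HasLines.mkLine hUV with huv
    have huvg : uv ≠ g := fun h => hUg (h ▸ (Configuration.HasLines.mkLine_ax hUV).1)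
    set W : P := Configuration.HasPoints.mkPoint huvg with hW
    have hWuv : W ∈ uv := (Configuration.HasPoints.mkPoint_ax huvg).1
    have hWg : W ∈ g := (Configuration.HasPoints.mkPoint_ax huvg).2
    have hWV : V ≠ W := fun h => hVg (h ▸ hWg)
    set k : {k : L // U ∈ k} := f₁ ⟨W, hWg⟩ with hk
    have hWρ : (f₂ (π k) : P) = W := congrArg Subtype.val (hid ⟨W, hWg⟩)
    have hWπ : W ∈ ((π k : L)) :=
      hWρ ▸ (Configuration.HasPoints.mkPoint_ax (hVne (π k))).1
    have hkuv : (k : L) = uv :=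
      (Configuration.Nondegenerate.eq_or_eq
        (Configuration.HasLines.mkLine_ax (hUne ⟨W, hWg⟩)).1
        (Configuration.HasLines.mkLine_ax (hUne ⟨W, hWg⟩)).2
        (Configuration.HasLines.mkLine_ax hUV).1 hWuv).resolve_left (hUne ⟨W, hWg⟩)
    have hVk : V ∈ (k : L) := hkuv ▸ (Configuration.HasLines.mkLine_ax hUV).2
    exact hnp k ((Configuration.Nondegenerate.eq_or_eq (π k).2 hWπ hVk
      (hkuv ▸ hWuv : W ∈ (k : L))).resolve_left hWV)
end

section
/- Characterization of tangents: Let κ be a conic, P a point on κ, and t a line passing through P. Then t is tangent to κ at P if and only if for every point Q of κ with Q ≠ P and every nonperspective projectivity ρ from the pencil Q* to the pencil P* with κ = κ(ρ;Q,P), one has t = ρ(s), where s is the secant QP. -/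
open Configuration

universe u
variable (P L : Type u) [Membership P L]

section TangentCharHelpers

open Configuration Configuration.HasPoints Configuration.HasLines

variable {P L}
variable [ProjectivePlane P L]

lemma line_eq' {A B : P} {l m : L} (hAB : A ≠ B) (hAl : A ∈ l) (hBl : B ∈ l)
    (hAm : A ∈ m) (hBm : B ∈ m) : l = m :=
  (Nondegenerate.eq_or_eq hAl hBl hAm hBm).resolve_left hAB

lemma point_eq' {A B : P} {l m : L} (hlm : l ≠ m) (hAl : A ∈ l) (hBl : B ∈ l)
    (hAm : A ∈ m) (hBm : B ∈ m) : A = B :=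
  (Nondegenerate.eq_or_eq hAl hBl hAm hBm).resolve_right hlm

/-- The perspectivity with center `O` from the range of `l` to the range of `m`. -/
noncomputable def perspMap (O : P) {l m : L} (hl : O ∉ l) (hm : O ∉ m)
    (X : {X : P // X ∈ l}) : {Y : P // Y ∈ m} :=
  have hXO : (X : P) ≠ O := fun h => hl (h ▸ X.2)
  have hkm : mkLine (P := P) (L := L) hXO ≠ m := fun h => hm (h ▸ (mkLine_ax hXO).2)
  ⟨mkPoint hkm, (mkPoint_ax hkm).2⟩

lemma perspMap_mem (O : P) {l m : L} (hl : O ∉ l) (hm : O ∉ m) (X : {X : P // X ∈ l}) :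
    ∃ k : L, O ∈ k ∧ (X : P) ∈ k ∧ (perspMap O hl hm X : P) ∈ k := by
  have hXO : (X : P) ≠ O := fun h => hl (h ▸ X.2)
  exact ⟨mkLine hXO, (mkLine_ax hXO).2, (mkLine_ax hXO).1, (mkPoint_ax _).1⟩

lemma perspMap_eq {O : P} {l m : L} (hl : O ∉ l) (hm : O ∉ m) (X : {X : P // X ∈ l})
    {W : P} (hWm : W ∈ m) {k : L} (hOk : O ∈ k) (hXk : (X : P) ∈ k) (hWk : W ∈ k) :
    (perspMap O hl hm X : P) = W := by
  obtain ⟨k₀, hOk₀, hXk₀, hfk₀⟩ := perspMap_mem O hl hm X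
  have hXO : (X : P) ≠ O := fun h => hl (h ▸ X.2)
  have hkk : k₀ = k := line_eq' hXO hXk₀ hOk₀ hXk hOk
  subst hkk
  exact point_eq' (fun h : k₀ = m => hm (h ▸ hOk₀)) hfk₀ hWk (perspMap O hl hm X).2 hWm

lemma perspMap_isPersp {O : P} {l m : L} (hl : O ∉ l) (hm : O ∉ m) :
    IsRangePersp P L l m (perspMap O hl hm) :=
  ⟨O, hl, hm, perspMap_mem O hl hm⟩

lemma perspMap_perspMap (O : P) {l m : L} (hl : O ∉ l) (hm : O ∉ m) (X : {X : P // X ∈ l}) :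
    perspMap O hm hl (perspMap O hl hm X) = X := by
  obtain ⟨k, hOk, hXk, hfk⟩ := perspMap_mem O hl hm X
  exact Subtype.ext (perspMap_eq hm hl _ X.2 hOk hfk hXk)

/-- The elementary map from the pencil of `U` to the range of `l`. -/
noncomputable def secMap (U : P) (l : L) (hUl : U ∉ l) (k : {k : L // U ∈ k}) :
    {X : P // X ∈ l} :=
  have hkl : (k : L) ≠ l := fun h => hUl (h ▸ k.2)
  ⟨mkPoint hkl, (mkPoint_ax hkl).2⟩

lemma secMap_mem (U : P) (l : L) (hUl : U ∉ l) (k : {k : L // U ∈ k}) :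
    (secMap U l hUl k : P) ∈ (k : L) :=
  (mkPoint_ax _).1

lemma secMap_eq {U : P} {l : L} (hUl : U ∉ l) (k : {k : L // U ∈ k})
    {W : P} (hWl : W ∈ l) (hWk : W ∈ (k : L)) : (secMap U l hUl k : P) = W :=
  point_eq' (fun h : (k : L) = l => hUl (h ▸ k.2)) (secMap_mem U l hUl k) hWk (secMap U l hUl k).2 hWl

lemma secMap_isElem (U : P) (l : L) (hUl : U ∉ l) : IsElemMap P L U l (secMap U l hUl) :=
  ⟨hUl, secMap_mem U l hUl⟩

/-- The elementary map from the range of `l` to the pencil of `U`. -/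
noncomputable def joinMap (U : P) (l : L) (hUl : U ∉ l) (X : {X : P // X ∈ l}) :
    {k : L // U ∈ k} :=
  have hUX : U ≠ (X : P) := fun h => hUl (h ▸ X.2)
  ⟨mkLine hUX, (mkLine_ax hUX).1⟩

lemma joinMap_mem (U : P) (l : L) (hUl : U ∉ l) (X : {X : P // X ∈ l}) :
    (X : P) ∈ (joinMap U l hUl X : L) :=
  (mkLine_ax _).2

lemma joinMap_eq {U : P} {l : L} (hUl : U ∉ l) (X : {X : P // X ∈ l})
    {k' : L} (hUk' : U ∈ k') (hXk' : (X : P) ∈ k') : (joinMap U l hUl X : L) = k' :=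
  line_eq' (fun h : U = (X : P) => hUl (h ▸ X.2)) (joinMap U l hUl X).2 (joinMap_mem U l hUl X) hUk' hXk'

lemma joinMap_isElemInv (U : P) (l : L) (hUl : U ∉ l) :
    IsElemInv P L U l (joinMap U l hUl) :=
  ⟨hUl, joinMap_mem U l hUl⟩

/-- Every projectivity has an inverse projectivity. -/
lemma isProj_inv {a b : Obj P L} {f : a.Carrier → b.Carrier} (h : IsProj P L a b f) :
    ∃ g : b.Carrier → a.Carrier, IsProj P L b a g ∧ (∀ x, g (f x) = x) ∧ (∀ y, f (g y) = y) := by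
  induction h with
  | @persp l m f h =>
    obtain ⟨O, hOl, hOm, hcol⟩ := h
    refine ⟨perspMap O hOm hOl, .persp (perspMap_isPersp hOm hOl), fun X => ?_, fun Y => ?_⟩
    · obtain ⟨k, hOk, hXk, hfk⟩ := hcol X
      exact Subtype.ext (perspMap_eq hOm hOl (f X) X.2 hOk hfk hXk)
    · obtain ⟨k, hOk, hXk, hfk⟩ := hcol (perspMap O hOm hOl Y)
      obtain ⟨k', hOk', hYk', hXk'⟩ := perspMap_mem O hOm hOl Y
      have hXO : (perspMap O hOm hOl Y : P) ≠ O := fun h => hOl (h ▸ (perspMap O hOm hOl Y).2)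
      have hkk : k = k' := line_eq' hXO hXk hOk hXk' hOk'
      subst hkk
      exact Subtype.ext (point_eq' (fun h : k = m => hOm (h ▸ hOk))
        hfk hYk' (f (perspMap O hOm hOl Y)).2 Y.2)
  | @elem U l f h =>
    obtain ⟨hUl, hmem⟩ := h
    refine ⟨joinMap U l hUl, .elemInv (joinMap_isElemInv U l hUl), fun k => ?_, fun X => ?_⟩
    · exact Subtype.ext (joinMap_eq hUl (f k) k.2 (hmem k))
    · refine Subtype.ext (point_eq' (fun h : (joinMap U l hUl X : L) = l =>
        hUl (h ▸ (joinMap U l hUl X).2)) (hmem _) (joinMap_mem U l hUl X)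
        (f (joinMap U l hUl X)).2 X.2)
  | @elemInv U l f h =>
    obtain ⟨hUl, hmem⟩ := h
    refine ⟨secMap U l hUl, .elem (secMap_isElem U l hUl), fun X => ?_, fun k => ?_⟩
    · exact Subtype.ext (secMap_eq hUl (f X) X.2 (hmem X))
    · refine Subtype.ext (line_eq' (show U ≠ (secMap U l hUl k : P) from
        fun h => hUl (h ▸ (secMap U l hUl k).2)) (f (secMap U l hUl k)).2
        (hmem _) k.2 (secMap_mem U l hUl k))
  | @comp a b c f g _ _ ih1 ih2 =>
    obtain ⟨f', hf'P, hf'l, hf'r⟩ := ih1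
    obtain ⟨g', hg'P, hg'l, hg'r⟩ := ih2
    refine ⟨f' ∘ g', .comp hg'P hf'P, fun x => ?_, fun y => ?_⟩
    · show f' (g' (g (f x))) = x
      rw [hg'l, hf'l]
    · show g (f (f' (g' y))) = y
      rw [hf'r, hg'r]

lemma exists_two_ne (h6 : LinesHaveAtLeast P L 6) (l : L) (W : P) :
    ∃ A B : P, A ∈ l ∧ B ∈ l ∧ A ≠ B ∧ A ≠ W ∧ B ≠ W := by
  classical
  obtain ⟨s, hcard, hmem⟩ := h6 l
  have h2 : 1 < (s.erase W).card := by
    have := Finset.pred_card_le_card_erase (a := W) (s := s)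
    omega
  obtain ⟨A, hA, B, hB, hAB⟩ := Finset.one_lt_card.mp h2
  exact ⟨A, B, hmem A (Finset.mem_of_mem_erase hA), hmem B (Finset.mem_of_mem_erase hB), hAB,
    Finset.ne_of_mem_erase hA, Finset.ne_of_mem_erase hB⟩

/-- A projectivity between the ranges of two distinct lines fixing their common
point is a perspectivity (consequence of Axiom T). -/
lemma persp_of_fixed (h6 : LinesHaveAtLeast P L 6) (hT : AxiomT P L)
    {c c' : L} (hcc' : c ≠ c') {g : {X : P // X ∈ c} → {Y : P // Y ∈ c'}}
    (hg : IsProj P L (.range c) (.range c') g)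
    {W : P} (hWc : W ∈ c) (hWc' : W ∈ c') (hfix : (g ⟨W, hWc⟩ : P) = W) :
    ∃ O : P, O ∉ c ∧ O ∉ c' ∧
      ∀ Z : {X : P // X ∈ c}, ∃ k : L, O ∈ k ∧ (Z : P) ∈ k ∧ (g Z : P) ∈ k := by
  obtain ⟨ginv, hginvP, hgl, hgr⟩ := isProj_inv hg
  have hginj : Function.Injective g := fun x y hxy => by rw [← hgl x, hxy, hgl y]
  obtain ⟨A₁, A₂, hA₁c, hA₂c, hA12, hA₁W, hA₂W⟩ := exists_two_ne h6 c W
  set a₁ : {X : P // X ∈ c} := ⟨A₁, hA₁c⟩ with ha₁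
  set a₂ : {X : P // X ∈ c} := ⟨A₂, hA₂c⟩ with ha₂
  have hgfixW : g ⟨W, hWc⟩ = ⟨W, hWc'⟩ := Subtype.ext hfix
  -- the images of A₁, A₂ are not on c
  have key : ∀ (a : {X : P // X ∈ c}), (a : P) ≠ W → (g a : P) ∉ c := by
    intro a haW hmem
    have h1 : (g a : P) = W := point_eq' hcc' hmem hWc (g a).2 hWc'
    have h2 : a = ⟨W, hWc⟩ := hginj (by rw [hgfixW]; exact Subtype.ext h1)
    exact haW (congrArg Subtype.val h2)
  have keyA : ∀ (a : {X : P // X ∈ c}), (a : P) ≠ W → (a : P) ∉ c' := by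
    intro a haW hmem
    exact haW (point_eq' hcc' a.2 hWc hmem hWc')
  have hne₁ : (a₁ : P) ≠ (g a₁ : P) := fun h => key a₁ hA₁W (h ▸ a₁.2)
  have hne₂ : (a₂ : P) ≠ (g a₂ : P) := fun h => key a₂ hA₂W (h ▸ a₂.2)
  set ℓ₁ : L := mkLine hne₁ with hℓ₁def
  set ℓ₂ : L := mkLine hne₂ with hℓ₂def
  have hA₁ℓ₁ : (a₁ : P) ∈ ℓ₁ := (mkLine_ax hne₁).1
  have hg₁ℓ₁ : (g a₁ : P) ∈ ℓ₁ := (mkLine_ax hne₁).2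
  have hA₂ℓ₂ : (a₂ : P) ∈ ℓ₂ := (mkLine_ax hne₂).1
  have hg₂ℓ₂ : (g a₂ : P) ∈ ℓ₂ := (mkLine_ax hne₂).2
  have hℓ₁c : ℓ₁ ≠ c := fun h => key a₁ hA₁W (h ▸ hg₁ℓ₁)
  have hℓ₂c : ℓ₂ ≠ c := fun h => key a₂ hA₂W (h ▸ hg₂ℓ₂)
  have hℓ₁c' : ℓ₁ ≠ c' := fun h => keyA a₁ hA₁W (h ▸ hA₁ℓ₁)
  have hℓ₂c' : ℓ₂ ≠ c' := fun h => keyA a₂ hA₂W (h ▸ hA₂ℓ₂)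
  have hga12 : g a₁ ≠ g a₂ := fun h => hA12 (congrArg Subtype.val (hginj h))
  have hℓ12 : ℓ₁ ≠ ℓ₂ := by
    intro h
    have hA₂ℓ₁ : (a₂ : P) ∈ ℓ₁ := h ▸ hA₂ℓ₂
    exact hℓ₁c (line_eq' hA12 hA₁ℓ₁ hA₂ℓ₁ hA₁c hA₂c)
  set O : P := mkPoint hℓ12 with hOdef
  have hOℓ₁ : O ∈ ℓ₁ := (mkPoint_ax hℓ12).1
  have hOℓ₂ : O ∈ ℓ₂ := (mkPoint_ax hℓ12).2
  have hOc : O ∉ c := by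
    intro h
    have h1 : O = A₁ := point_eq' hℓ₁c hOℓ₁ hA₁ℓ₁ h hA₁c
    have h2 : O = A₂ := point_eq' hℓ₂c hOℓ₂ hA₂ℓ₂ h hA₂c
    exact hA12 (h1 ▸ h2)
  have hOc' : O ∉ c' := by
    intro h
    have h1 : O = (g a₁ : P) := point_eq' hℓ₁c' hOℓ₁ hg₁ℓ₁ h (g a₁).2
    have h2 : O = (g a₂ : P) := point_eq' hℓ₂c' hOℓ₂ hg₂ℓ₂ h (g a₂).2
    exact hga12 (Subtype.ext (h1 ▸ h2))
  -- the perspectivity with center O agrees with g at three points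
  set q : {X : P // X ∈ c} → {X : P // X ∈ c} := perspMap O hOc' hOc ∘ g with hqdef
  have hqP : IsProj P L (.range c) (.range c) q :=
    .comp hg (.persp (perspMap_isPersp hOc' hOc))
  have hWO : W ≠ O := fun h => hOc (h ▸ hWc)
  have hqW : q ⟨W, hWc⟩ = ⟨W, hWc⟩ := by
    show perspMap O hOc' hOc (g ⟨W, hWc⟩) = ⟨W, hWc⟩
    rw [hgfixW]
    exact Subtype.ext (perspMap_eq hOc' hOc _ hWc (k := mkLine hWO)
      (mkLine_ax hWO).2 (mkLine_ax hWO).1 (mkLine_ax hWO).1)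
  have hq₁ : q a₁ = a₁ := by
    show perspMap O hOc' hOc (g a₁) = a₁
    exact Subtype.ext (perspMap_eq hOc' hOc _ hA₁c (k := ℓ₁) hOℓ₁ hg₁ℓ₁ hA₁ℓ₁)
  have hq₂ : q a₂ = a₂ := by
    show perspMap O hOc' hOc (g a₂) = a₂
    exact Subtype.ext (perspMap_eq hOc' hOc _ hA₂c (k := ℓ₂) hOℓ₂ hg₂ℓ₂ hA₂ℓ₂)
  have hid : ∀ w, q w = w := by
    refine hT (.range c) q hqP ⟨⟨W, hWc⟩, a₁, a₂, ?_, ?_, ?_, hqW, hq₁, hq₂⟩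
    · exact fun h => hA₁W (congrArg Subtype.val h).symm
    · exact fun h => hA₂W (congrArg Subtype.val h).symm
    · exact fun h => hA12 (congrArg Subtype.val h)
  refine ⟨O, hOc, hOc', fun Z => ?_⟩
  have h1 : perspMap O hOc' hOc (g Z) = Z := hid Z
  have h2 : g Z = perspMap O hOc hOc' Z := by
    conv_rhs => rw [← h1]
    exact (perspMap_perspMap O hOc' hOc (g Z)).symm
  obtain ⟨k, hOk, hZk, hpk⟩ := perspMap_mem O hOc hOc' Z
  exact ⟨k, hOk, hZk, by rw [h2]; exact hpk⟩

/-- The image of the secant `QPt` under a generating projectivity is tangent at `Pt`. -/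
lemma secant_tangent {Q Pt : P} {ρ : {k : L // Q ∈ k} → {k : L // Pt ∈ k}}
    (hρ : IsProj P L (.pencil Q) (.pencil Pt) ρ)
    (hnp : ∀ k : {k : L // Q ∈ k}, ((ρ k : L)) ≠ (k : L))
    {s : L} (hQs : Q ∈ s) (hPts : Pt ∈ s) :
    IsTangent P L (conicSet P L Q Pt ρ) ((ρ ⟨s, hQs⟩ : L)) Pt := by
  obtain ⟨g, hgP, hgl, hgr⟩ := isProj_inv hρ
  have hρinj : Function.Injective ρ := fun x y h => by rw [← hgl x, h, hgl y]
  refine ⟨⟨⟨s, hQs⟩, hPts, (ρ _).2⟩, (ρ _).2, ?_⟩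
  intro X hX hXt
  obtain ⟨k, hXk, hXρk⟩ := hX
  by_contra hXPt
  have h1 : ρ k = ρ ⟨s, hQs⟩ :=
    Subtype.ext (line_eq' (show X ≠ Pt from hXPt) hXρk (ρ k).2 hXt (ρ ⟨s, hQs⟩).2)
  have h2 : k = ⟨s, hQs⟩ := hρinj h1
  have hXs : X ∈ s := by rw [h2] at hXk; exact hXk
  exact hXPt (point_eq' (hnp ⟨s, hQs⟩) hXt (ρ ⟨s, hQs⟩).2 hXs hPts)

/-- Forward direction: a tangent at `Pt` must be the image of the secant. -/
lemma tangent_to_secant {κ : Set P} {Q Pt : P} (hQκ : Q ∈ κ) (hQPt : Q ≠ Pt)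
    {ρ : {k : L // Q ∈ k} → {k : L // Pt ∈ k}}
    (hρ : IsProj P L (.pencil Q) (.pencil Pt) ρ)
    (hκ : κ = conicSet P L Q Pt ρ)
    {t : L} (hPt : Pt ∈ t) (htan : IsTangent P L κ t Pt)
    {s : L} (hQs : Q ∈ s) (hPts : Pt ∈ s) : t = (ρ ⟨s, hQs⟩ : L) := by
  obtain ⟨g, hgP, hgl, hgr⟩ := isProj_inv hρ
  by_contra hne
  set k : {k : L // Q ∈ k} := g ⟨t, hPt⟩ with hkdef
  have hρk : ρ k = ⟨t, hPt⟩ := hgr _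
  have hkt : (k : L) ≠ t := by
    intro h
    have hQt : Q ∈ t := h ▸ k.2
    exact hQPt (htan.2.2 Q hQκ hQt)
  set X : P := mkPoint hkt with hXdef
  have hXk : X ∈ (k : L) := (mkPoint_ax hkt).1
  have hXt : X ∈ t := (mkPoint_ax hkt).2
  have hXκ : X ∈ κ := by rw [hκ]; exact ⟨k, hXk, by rw [hρk]; exact hXt⟩
  have hXPt : X = Pt := htan.2.2 X hXκ hXt
  have hks : (k : L) = s := line_eq' hQPt k.2 (hXPt ▸ hXk) hQs hPts
  have hkeq : k = ⟨s, hQs⟩ := Subtype.ext hks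
  exact hne (by rw [← hkeq, hρk])

lemma conic_symm {U V : P} {π : {k : L // U ∈ k} → {k : L // V ∈ k}}
    {g : {k : L // V ∈ k} → {k : L // U ∈ k}}
    (hgl : ∀ x, g (π x) = x) (hgr : ∀ y, π (g y) = y) :
    conicSet P L U V π = conicSet P L V U g := by
  ext X
  constructor
  · rintro ⟨k, h1, h2⟩
    exact ⟨π k, h2, by rw [hgl k]; exact h1⟩
  · rintro ⟨m, h1, h2⟩
    exact ⟨g m, h2, by rw [hgr m]; exact h1⟩


/-- **Steiner's theorem** (vertex change): any point of a conic can serve as the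
vertex of a generating projectivity. -/
lemma vertex_change (h6 : LinesHaveAtLeast P L 6) (hT : AxiomT P L)
    {U V : P} (hUV : U ≠ V) {π : {k : L // U ∈ k} → {k : L // V ∈ k}}
    (hπ : IsProj P L (.pencil U) (.pencil V) π)
    (hnp : ∀ k : {k : L // U ∈ k}, ((π k : L)) ≠ (k : L))
    {Pt : P} (hPtκ : Pt ∈ conicSet P L U V π) (hPU : Pt ≠ U) (hPV : Pt ≠ V) :
    ∃ σ : {k : L // U ∈ k} → {k : L // Pt ∈ k},
      IsProj P L (.pencil U) (.pencil Pt) σ ∧ (∀ k, ((σ k : L)) ≠ (k : L)) ∧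
      conicSet P L U V π = conicSet P L U Pt σ := by
  classical
  obtain ⟨g, hgP, hgl, hgr⟩ := isProj_inv hπ
  have hπinj : Function.Injective π := fun x y hxy => by rw [← hgl x, hxy, hgl y]
  set s₀ : L := mkLine hUV with hs₀def
  have hUs₀ : U ∈ s₀ := (mkLine_ax hUV).1
  have hVs₀ : V ∈ s₀ := (mkLine_ax hUV).2
  set u : {k : L // U ∈ k} := g ⟨s₀, hVs₀⟩ with hudef
  have hπu : π u = ⟨s₀, hVs₀⟩ := hgr _
  set v : {k : L // V ∈ k} := π ⟨s₀, hUs₀⟩ with hvdef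
  have hus₀ : (u : L) ≠ s₀ := by
    intro h
    have h2 := hnp u
    rw [hπu] at h2
    exact h2 h.symm
  have hvs₀ : (v : L) ≠ s₀ := hnp ⟨s₀, hUs₀⟩
  have hUv : U ∉ (v : L) := fun h => hvs₀ (line_eq' hUV h v.2 hUs₀ hVs₀)
  have hVu : V ∉ (u : L) := fun h => hus₀ (line_eq' hUV u.2 h hUs₀ hVs₀)
  -- a conic point other than U lies on the image of its chord through U
  have chord : ∀ {X : P}, X ∈ conicSet P L U V π → ∀ (k : {k : L // U ∈ k}),
      X ∈ (k : L) → X ≠ U → X ∈ (π k : L) := by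
    intro X hX k hXk hXU
    obtain ⟨k', hXk', hXπk'⟩ := hX
    have hkk : k' = k := Subtype.ext (line_eq' (Ne.symm hXU) k'.2 hXk' k.2 hXk)
    rw [← hkk]
    exact hXπk'
  -- the lines u and v are tangent at U resp. V
  have tanU : ∀ {X : P}, X ∈ conicSet P L U V π → X ∈ (u : L) → X = U := by
    intro X hX hXu
    by_contra hXU
    have hk : X ∈ (π u : L) := chord hX u hXu hXU
    rw [hπu] at hk
    exact hXU (point_eq' hus₀ hXu u.2 hk hUs₀)
  have tanV : ∀ {X : P}, X ∈ conicSet P L U V π → X ∈ (v : L) → X = V := by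
    intro X hX hXv
    by_contra hXV
    have hXU : X ≠ U := fun h => hUv (h ▸ hXv)
    have h1 : X ∈ (π ⟨mkLine (Ne.symm hXU), (mkLine_ax (Ne.symm hXU)).1⟩ : L) :=
      chord hX _ (mkLine_ax (Ne.symm hXU)).2 hXU
    have h2 : (π ⟨mkLine (Ne.symm hXU), (mkLine_ax (Ne.symm hXU)).1⟩ : L) = (v : L) :=
      line_eq' (Ne.symm hXV) (π _).2 h1 v.2 hXv
    have h3 : (⟨mkLine (Ne.symm hXU), (mkLine_ax (Ne.symm hXU)).1⟩ : {k : L // U ∈ k}) =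
        ⟨s₀, hUs₀⟩ := hπinj (by rw [← hvdef]; exact Subtype.ext h2)
    have h4 : X ∈ s₀ := by
      have h5 : X ∈ (mkLine (Ne.symm hXU) : L) := (mkLine_ax (Ne.symm hXU)).2
      have h6 : (mkLine (Ne.symm hXU) : L) = s₀ := congrArg Subtype.val h3
      rw [h6] at h5
      exact h5
    exact hXV (point_eq' hvs₀ hXv v.2 h4 hVs₀)
  -- a secant through two conic points different from U misses U
  have secU : ∀ {A B : P} {l : L}, A ∈ conicSet P L U V π → B ∈ conicSet P L U V π →
      A ≠ B → A ≠ U → B ≠ U → A ∈ l → B ∈ l → U ∉ l := by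
    intro A B l hA hB hAB hAU hBU hAl hBl hUl
    have hAπ : A ∈ (π ⟨l, hUl⟩ : L) := chord hA ⟨l, hUl⟩ hAl hAU
    have hBπ : B ∈ (π ⟨l, hUl⟩ : L) := chord hB ⟨l, hUl⟩ hBl hBU
    exact hAB (point_eq' (hnp ⟨l, hUl⟩) hAπ hBπ hAl hBl)
  have secV : ∀ {A B : P} {l : L}, A ∈ conicSet P L U V π → B ∈ conicSet P L U V π →
      A ≠ B → A ≠ U → B ≠ U → A ≠ V → B ≠ V → A ∈ l → B ∈ l → V ∉ l := by
    intro A B l hA hB hAB hAU hBU hAV hBV hAl hBl hVl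
    set kA : {k : L // U ∈ k} := ⟨mkLine (Ne.symm hAU), (mkLine_ax (Ne.symm hAU)).1⟩ with hkA
    set kB : {k : L // U ∈ k} := ⟨mkLine (Ne.symm hBU), (mkLine_ax (Ne.symm hBU)).1⟩ with hkB
    have hAkA : A ∈ (kA : L) := (mkLine_ax (Ne.symm hAU)).2
    have hBkB : B ∈ (kB : L) := (mkLine_ax (Ne.symm hBU)).2
    have hAπ : A ∈ (π kA : L) := chord hA kA hAkA hAU
    have hBπ : B ∈ (π kB : L) := chord hB kB hBkB hBU
    have hπA : (π kA : L) = l := line_eq' (Ne.symm hAV) (π kA).2 hAπ hVl hAl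
    have hπB : (π kB : L) = l := line_eq' (Ne.symm hBV) (π kB).2 hBπ hVl hBl
    have hAB' : kA = kB := hπinj (Subtype.ext (hπA.trans hπB.symm))
    have hBkA : B ∈ (kA : L) := by rw [hAB']; exact hBkB
    have hlkA : (kA : L) = l := line_eq' hAB hAkA hBkA hAl hBl
    exact secU hA hB hAB hAU hBU hAl hBl (hlkA ▸ kA.2)
  -- facts about Pt
  have hPts₀ : Pt ∉ s₀ := by
    intro h
    have h1 : Pt ∈ (π ⟨s₀, hUs₀⟩ : L) := chord hPtκ ⟨s₀, hUs₀⟩ h hPU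
    rw [← hvdef] at h1
    exact hPV (tanV hPtκ h1)
  have hPtu : Pt ∉ (u : L) := fun h => hPU (tanU hPtκ h)
  have hUPt : U ≠ Pt := Ne.symm hPU
  set sUP : L := mkLine hUPt with hsUPdef
  have hUsUP : U ∈ sUP := (mkLine_ax hUPt).1
  have hPtsUP : Pt ∈ sUP := (mkLine_ax hUPt).2
  have hVsUP : V ∉ sUP := by
    intro h
    have : sUP = s₀ := line_eq' hUV hUsUP h hUs₀ hVs₀
    exact hPts₀ (this ▸ hPtsUP)
  have hvsUP : (v : L) ≠ sUP := fun h => hVsUP (h ▸ v.2)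
  set N : P := mkPoint hvsUP with hNdef
  have hNv : N ∈ (v : L) := (mkPoint_ax hvsUP).1
  have hNsUP : N ∈ sUP := (mkPoint_ax hvsUP).2
  have hNs₀ : N ∉ s₀ := by
    intro h
    have hNV : N = V := point_eq' hvs₀ hNv v.2 h hVs₀
    exact hVsUP (hNV ▸ hNsUP)
  have hNu : N ∉ (u : L) := by
    intro h
    by_cases hNU : N = U
    · exact hUv (hNU ▸ hNv)
    · have h2 : (u : L) = sUP := line_eq' hNU h u.2 hNsUP hUsUP
      exact hPtu (by rw [h2]; exact hPtsUP)
  -- the new projectivity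
  set σ : {k : L // U ∈ k} → {k : L // Pt ∈ k} :=
    (joinMap Pt s₀ hPts₀) ∘ (perspMap N hNu hNs₀) ∘ (secMap V (u : L) hVu) ∘ π with hσdef
  have hσP : IsProj P L (.pencil U) (.pencil Pt) σ := by
    have h1 : IsProj P L (.pencil U) (.range (u : L)) ((secMap V (u : L) hVu) ∘ π) :=
      .comp hπ (.elem (secMap_isElem V (u : L) hVu))
    have h2 := IsProj.comp h1 (.persp (perspMap_isPersp hNu hNs₀))
    exact IsProj.comp h2 (.elemInv (joinMap_isElemInv Pt s₀ hPts₀))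
  -- main evaluation: every conic point other than U, Pt lies on σ of its chord
  have σmem : ∀ {X : P}, X ∈ conicSet P L U V π → X ≠ U → X ≠ Pt →
      ∀ (k : {k : L // U ∈ k}), X ∈ (k : L) → X ∈ (σ k : L) := by
    intro X hX hXU hXPt k hXk
    by_cases hXV : X = V
    · rw [hXV] at hXk ⊢
      have hk : k = ⟨s₀, hUs₀⟩ := Subtype.ext (line_eq' hUV k.2 hXk hUs₀ hVs₀)
      rw [hk]
      show V ∈ (joinMap Pt s₀ hPts₀ (perspMap N hNu hNs₀
        (secMap V (u : L) hVu (π ⟨s₀, hUs₀⟩))) : L)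
      have hZ₁v : (secMap V (u : L) hVu (π ⟨s₀, hUs₀⟩) : P) ∈ (v : L) := by
        rw [hvdef]
        exact secMap_mem V (u : L) hVu (π ⟨s₀, hUs₀⟩)
      have hp : (perspMap N hNu hNs₀ (secMap V (u : L) hVu (π ⟨s₀, hUs₀⟩)) : P) = V :=
        perspMap_eq hNu hNs₀ _ hVs₀ (k := (v : L)) hNv hZ₁v v.2
      have hjm := joinMap_mem Pt s₀ hPts₀ (perspMap N hNu hNs₀ (secMap V (u : L) hVu (π ⟨s₀, hUs₀⟩)))
      rw [hp] at hjm
      exact hjm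
    · -- the generic case, via the perspectivity obtained from Axiom T
      have hXπk : X ∈ (π k : L) := chord hX k hXk hXU
      have hPtX : Pt ≠ X := Ne.symm hXPt
      set cX : L := mkLine hPtX with hcXdef
      have hPtcX : Pt ∈ cX := (mkLine_ax hPtX).1
      have hXcX : X ∈ cX := (mkLine_ax hPtX).2
      have hUcX : U ∉ cX := secU hPtκ hX hPtX hPU hXU hPtcX hXcX
      have hVcX : V ∉ cX := secV hPtκ hX hPtX hPU hXU hPV hXV hPtcX hXcX
      set ζ : {Y : P // Y ∈ cX} → {Y : P // Y ∈ sUP} :=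
        (secMap V sUP hVsUP) ∘ π ∘ (joinMap U cX hUcX) with hζdef
      have hζP : IsProj P L (.range cX) (.range sUP) ζ :=
        .comp (.comp (.elemInv (joinMap_isElemInv U cX hUcX)) hπ)
          (.elem (secMap_isElem V sUP hVsUP))
      have hcXsUP : cX ≠ sUP := fun h => hUcX (h ▸ hUsUP)
      have hζfix : (ζ ⟨Pt, hPtcX⟩ : P) = Pt := by
        have h1 : joinMap U cX hUcX ⟨Pt, hPtcX⟩ = ⟨sUP, hUsUP⟩ :=
          Subtype.ext (joinMap_eq hUcX _ hUsUP hPtsUP)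
        show (secMap V sUP hVsUP (π (joinMap U cX hUcX ⟨Pt, hPtcX⟩)) : P) = Pt
        rw [h1]
        exact secMap_eq hVsUP _ hPtsUP (chord hPtκ ⟨sUP, hUsUP⟩ hPtsUP hPU)
      obtain ⟨OX, hOXcX, hOXsUP, hOXcol⟩ :=
        persp_of_fixed h6 hT hcXsUP hζP hPtcX hPtsUP hζfix
      -- OX lies on the chord π k
      have hOXπk : OX ∈ (π k : L) := by
        obtain ⟨k₁, hOk₁, hXk₁, hζXk₁⟩ := hOXcol ⟨X, hXcX⟩
        have hjX : joinMap U cX hUcX ⟨X, hXcX⟩ = k :=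
          Subtype.ext (joinMap_eq hUcX _ k.2 hXk)
        have hζX : ζ ⟨X, hXcX⟩ = secMap V sUP hVsUP (π k) := by
          show secMap V sUP hVsUP (π (joinMap U cX hUcX ⟨X, hXcX⟩)) = _
          rw [hjX]
        have hYXπk : (secMap V sUP hVsUP (π k) : P) ∈ (π k : L) :=
          secMap_mem V sUP hVsUP (π k)
        have hXYX : X ≠ (secMap V sUP hVsUP (π k) : P) := by
          intro h
          have hXsUP : X ∈ sUP := by
            rw [h]
            exact (secMap V sUP hVsUP (π k)).2
          exact hcXsUP (line_eq' hPtX hPtcX hXcX hPtsUP hXsUP)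
        rw [hζX] at hζXk₁
        have hk₁ : k₁ = (π k : L) := line_eq' hXYX hXk₁ hζXk₁ hXπk hYXπk
        exact hk₁ ▸ hOk₁
      -- OX lies on the line joining N with B := cX · s₀
      have hcXs₀ : cX ≠ s₀ := fun h => hPts₀ (h ▸ hPtcX)
      set B : P := mkPoint hcXs₀ with hBdef
      have hBcX : B ∈ cX := (mkPoint_ax hcXs₀).1
      have hBs₀ : B ∈ s₀ := (mkPoint_ax hcXs₀).2
      have hBU : B ≠ U := fun h => hUcX (h ▸ hBcX)
      obtain ⟨k₂, hOk₂, hBk₂, hζBk₂⟩ := hOXcol ⟨B, hBcX⟩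
      have hjB : joinMap U cX hUcX ⟨B, hBcX⟩ = ⟨s₀, hUs₀⟩ :=
        Subtype.ext (joinMap_eq hUcX _ hUs₀ hBs₀)
      have hζB : (ζ ⟨B, hBcX⟩ : P) = N := by
        show (secMap V sUP hVsUP (π (joinMap U cX hUcX ⟨B, hBcX⟩)) : P) = N
        rw [hjB]
        refine secMap_eq hVsUP _ hNsUP ?_
        rw [← hvdef]
        exact hNv
      rw [hζB] at hζBk₂
      -- OX lies on u
      have hucX : (u : L) ≠ cX := fun h => hPtu (by rw [h]; exact hPtcX)
      set Zu : P := mkPoint hucX with hZudef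
      have hZuu : Zu ∈ (u : L) := (mkPoint_ax hucX).1
      have hZucX : Zu ∈ cX := (mkPoint_ax hucX).2
      have hZuU : Zu ≠ U := fun h => hUcX (h ▸ hZucX)
      have hOXu : OX ∈ (u : L) := by
        obtain ⟨k₃, hOk₃, hZk₃, hζZk₃⟩ := hOXcol ⟨Zu, hZucX⟩
        have hjZ : joinMap U cX hUcX ⟨Zu, hZucX⟩ = u :=
          Subtype.ext (joinMap_eq hUcX _ u.2 hZuu)
        have hζZ : (ζ ⟨Zu, hZucX⟩ : P) = U := by
          show (secMap V sUP hVsUP (π (joinMap U cX hUcX ⟨Zu, hZucX⟩)) : P) = U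
          rw [hjZ, hπu]
          exact secMap_eq hVsUP _ hUsUP hUs₀
        rw [hζZ] at hζZk₃
        have hk₃ : k₃ = (u : L) := line_eq' hZuU hZk₃ hζZk₃ hZuu u.2
        exact hk₃ ▸ hOk₃
      -- hence OX is exactly the point (π k) · u
      have hπku : (π k : L) ≠ (u : L) := by
        intro h
        have hUπk : U ∈ (π k : L) := h.symm ▸ u.2
        have hπks₀ : (π k : L) = s₀ := line_eq' hUV hUπk (π k).2 hUs₀ hVs₀
        have hku : k = u := hπinj (by rw [hπu]; exact Subtype.ext hπks₀)
        exact hXU (tanU hX (hku ▸ hXk))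
      have hOXval : (secMap V (u : L) hVu (π k) : P) = OX :=
        secMap_eq hVu (π k) hOXu hOXπk
      -- now compute σ k
      show X ∈ (joinMap Pt s₀ hPts₀ (perspMap N hNu hNs₀ (secMap V (u : L) hVu (π k))) : L)
      have hpersp : (perspMap N hNu hNs₀ (secMap V (u : L) hVu (π k)) : P) = B := by
        refine perspMap_eq hNu hNs₀ _ hBs₀ (k := k₂) hζBk₂ ?_ hBk₂
        rw [hOXval]
        exact hOk₂
      have hBPt : Pt ≠ B := fun h => hPts₀ (h ▸ hBs₀)
      have hjoin : (joinMap Pt s₀ hPts₀ (perspMap N hNu hNs₀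
          (secMap V (u : L) hVu (π k))) : L) = cX := by
        refine joinMap_eq hPts₀ _ hPtcX ?_
        rw [hpersp]
        exact hBcX
      rw [hjoin]
      exact hXcX
  -- the value of σ at the tangent u
  have hσu : (σ u : L) = sUP := by
    show (joinMap Pt s₀ hPts₀ (perspMap N hNu hNs₀ (secMap V (u : L) hVu (π u))) : L) = sUP
    rw [hπu]
    have h1 : (secMap V (u : L) hVu ⟨s₀, hVs₀⟩ : P) = U := secMap_eq hVu _ u.2 hUs₀
    have hUN : U ≠ N := fun h => hUv (h ▸ hNv)
    have h2 : (perspMap N hNu hNs₀ (secMap V (u : L) hVu ⟨s₀, hVs₀⟩) : P) = U := by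
      refine perspMap_eq hNu hNs₀ _ hUs₀ (k := mkLine hUN) (mkLine_ax hUN).2 ?_ (mkLine_ax hUN).1
      rw [h1]
      exact (mkLine_ax hUN).1
    refine joinMap_eq hPts₀ _ hPtsUP ?_
    rw [h2]
    exact hUsUP
  have hσuU : U ∈ (σ u : L) := by rw [hσu]; exact hUsUP
  -- σ is injective and nonperspective
  obtain ⟨σinv, hσinvP, hσl, hσr⟩ := isProj_inv hσP
  have hσinj : Function.Injective σ := fun x y h => by rw [← hσl x, h, hσl y]
  have hσnp : ∀ k : {k : L // U ∈ k}, (σ k : L) ≠ (k : L) := by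
    intro k h
    have hPtk : Pt ∈ (k : L) := h ▸ (σ k).2
    have hk : (k : L) = sUP := line_eq' hUPt k.2 hPtk hUsUP hPtsUP
    have heq : σ k = σ u := Subtype.ext (by rw [hσu, h, hk])
    have hku : k = u := hσinj heq
    rw [hku] at hPtk
    exact hPtu hPtk
  -- the two conics coincide
  refine ⟨σ, hσP, hσnp, ?_⟩
  ext Y
  constructor
  · intro hY
    by_cases hYU : Y = U
    · subst hYU
      exact ⟨u, u.2, hσuU⟩
    · by_cases hYPt : Y = Pt
      · subst hYPt
        exact ⟨⟨sUP, hUsUP⟩, hPtsUP, (σ ⟨sUP, hUsUP⟩).2⟩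
      · have hUY : U ≠ Y := Ne.symm hYU
        exact ⟨⟨mkLine hUY, (mkLine_ax hUY).1⟩, (mkLine_ax hUY).2,
          σmem hY hYU hYPt _ (mkLine_ax hUY).2⟩
  · rintro ⟨k, hYk, hYσk⟩
    by_cases hk : (k : L) = sUP
    · have hPtk : Pt ∈ (k : L) := by rw [hk]; exact hPtsUP
      have hY : Y = Pt := point_eq' (Ne.symm (hσnp k)) hYk hPtk hYσk (σ k).2
      rw [hY]
      exact hPtκ
    · have hπkk : (π k : L) ≠ (k : L) := hnp k
      set Xk : P := mkPoint hπkk with hXkdef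
      have hXkπ : Xk ∈ (π k : L) := (mkPoint_ax hπkk).1
      have hXkk : Xk ∈ (k : L) := (mkPoint_ax hπkk).2
      have hXκ : Xk ∈ conicSet P L U V π := ⟨k, hXkk, hXkπ⟩
      have hXkσ : Xk ∈ (σ k : L) := by
        by_cases hXkU : Xk = U
        · have hUπk : U ∈ (π k : L) := hXkU ▸ hXkπ
          have hπks₀ : (π k : L) = s₀ := line_eq' hUV hUπk (π k).2 hUs₀ hVs₀
          have hku : k = u := hπinj (by rw [hπu]; exact Subtype.ext hπks₀)
          rw [hku, hXkU]
          exact hσuU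
        · have hXkPt : Xk ≠ Pt := by
            intro h
            exact hk (line_eq' hUPt k.2 (h ▸ hXkk) hUsUP hPtsUP)
          exact σmem hXκ hXkU hXkPt k hXkk
      have hYXk : Y = Xk := point_eq' (Ne.symm (hσnp k)) hYk hXkk hYσk hXkσ
      rw [hYXk]
      exact hXκ


end TangentCharHelpers

/-- **Characterization of tangents.** Let `κ` be a conic, `Pt` a point on `κ`,
and `t` a line through `Pt`.  Then `t` is tangent to `κ` at `Pt` if and only if
for every point `Q` of `κ` with `Q ≠ Pt` and every nonperspective projectivity
`ρ : Q* → Pt*` with `κ = κ(ρ;Q,Pt)`, one has `t = ρ(s)` where `s` is the secant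
`QPt`. -/
theorem tangent_characterization
    [Configuration.ProjectivePlane P L]
    (h6 : LinesHaveAtLeast P L 6) (hT : AxiomT P L)
    (κ : Set P) (hκ : IsConic P L κ)
    (Pt : P) (hPκ : Pt ∈ κ) (t : L) (hPt : Pt ∈ t) :
    IsTangent P L κ t Pt ↔
      ∀ Q : P, Q ∈ κ → Q ≠ Pt →
        ∀ ρ : {k : L // Q ∈ k} → {k : L // Pt ∈ k},
          IsProj P L (.pencil Q) (.pencil Pt) ρ →
          (∀ k : {k : L // Q ∈ k}, ((ρ k : L)) ≠ (k : L)) →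
          κ = conicSet P L Q Pt ρ →
          ∀ (s : L) (hQs : Q ∈ s), Pt ∈ s → t = ((ρ ⟨s, hQs⟩ : L)) := by
  obtain ⟨U, V, π, hUV, hπ, hnp, hκeq⟩ := hκ
  constructor
  · intro htan Q hQκ hQPt ρ hρ hρnp hκρ s hQs hPts
    exact tangent_to_secant hQκ hQPt hρ hκρ hPt htan hQs hPts
  · intro H
    by_cases hPV : Pt = V
    · subst hPV
      have hUκ : U ∈ κ := by
        rw [hκeq]
        obtain ⟨g, hgP, hgl, hgr⟩ := isProj_inv hπ
        exact ⟨g ⟨HasLines.mkLine hUV, (HasLines.mkLine_ax hUV).2⟩, (g _).2,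
          by rw [hgr]; exact (HasLines.mkLine_ax hUV).1⟩
      have ht := H U hUκ hUV π hπ hnp hκeq (HasLines.mkLine hUV)
        (HasLines.mkLine_ax hUV).1 (HasLines.mkLine_ax hUV).2
      rw [ht, hκeq]
      exact secant_tangent hπ hnp (HasLines.mkLine_ax hUV).1 (HasLines.mkLine_ax hUV).2
    · by_cases hPU : Pt = U
      · subst hPU
        obtain ⟨g, hgP, hgl, hgr⟩ := isProj_inv hπ
        have hκg : κ = conicSet P L V Pt g := by rw [hκeq]; exact conic_symm hgl hgr
        have hgnp : ∀ m : {k : L // V ∈ k}, ((g m : L)) ≠ (m : L) := by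
          intro m h
          have h2 := hnp (g m)
          rw [hgr m] at h2
          exact h2 h.symm
        have hVκ : V ∈ κ := by
          rw [hκeq]
          exact ⟨⟨HasLines.mkLine hUV, (HasLines.mkLine_ax hUV).1⟩,
            (HasLines.mkLine_ax hUV).2, (π _).2⟩
        have hVPt : V ≠ Pt := Ne.symm hUV
        have ht := H V hVκ hVPt g hgP hgnp hκg (HasLines.mkLine hUV)
          (HasLines.mkLine_ax hUV).2 (HasLines.mkLine_ax hUV).1
        rw [ht, hκg]
        exact secant_tangent hgP hgnp (HasLines.mkLine_ax hUV).2 (HasLines.mkLine_ax hUV).1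
      · have hPtκ' : Pt ∈ conicSet P L U V π := by rw [← hκeq]; exact hPκ
        obtain ⟨σ, hσP, hσnp, hset⟩ := vertex_change h6 hT hUV hπ hnp hPtκ' hPU hPV
        have hκσ : κ = conicSet P L U Pt σ := hκeq.trans hset
        have hUκ : U ∈ κ := by
          rw [hκeq]
          obtain ⟨g, hgP, hgl, hgr⟩ := isProj_inv hπ
          exact ⟨g ⟨HasLines.mkLine hUV, (HasLines.mkLine_ax hUV).2⟩, (g _).2,
            by rw [hgr]; exact (HasLines.mkLine_ax hUV).1⟩
        have hUPt' : U ≠ Pt := fun h => hPU h.symm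
        have ht := H U hUκ hUPt' σ hσP hσnp hκσ (HasLines.mkLine hUPt')
          (HasLines.mkLine_ax hUPt').1 (HasLines.mkLine_ax hUPt').2
        rw [ht, hκσ]
        exact secant_tangent hσP hσnp (HasLines.mkLine_ax hUPt').1 (HasLines.mkLine_ax hUPt').2
end
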